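/- arXiv:1511.09391 — 3 statements merged into one kernel-verified Lean document; each statement's English description precedes it below -/
import Mathlib

section
/- Let Λ be a hereditary artin algebra and M a finite-length Λ-module without self-extensions (Ext¹(M,M) = 0). If M is sincere (every simple Λ-module occurs as a composition factor of M), then M is faithful. -/
open CategoryTheory

section Defs

variable (Λ : Type) [Ring Λ]

/-- `Ext¹(M, N) = 0`: every short exact sequence `0 → N → E → M → 0` splits. -/
def ExtVanish (M N : Type) [AddCommGroup M] [Module Λ M] [AddCommGroup N] [Module Λ N] : Prop :=
  ∀ (E : Type) [AddCommGroup E] [Module Λ E] (f : N →ₗ[Λ] E) (g : E →ₗ[Λ] M),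
    Function.Injective f → Function.Surjective g → LinearMap.range f = LinearMap.ker g →
    ∃ s : M →ₗ[Λ] E, g.comp s = LinearMap.id

/-- `X` generates `Y`: `Y` is a quotient of a finite direct sum of copies of `X`. -/
def Generates (X Y : Type) [AddCommGroup X] [Module Λ X] [AddCommGroup Y] [Module Λ Y] : Prop :=
  ∃ (n : ℕ) (g : (Fin n → X) →ₗ[Λ] Y), Function.Surjective g

/-- `X` cogenerates `Y`: `Y` embeds into a finite direct sum of copies of `X`. -/
def Cogenerates (X Y : Type) [AddCommGroup X] [Module Λ X] [AddCommGroup Y] [Module Λ Y] : Prop :=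
  ∃ (n : ℕ) (f : Y →ₗ[Λ] (Fin n → X)), Function.Injective f

/-- The endomorphism ring of `M` is a division ring. -/
def IsBrick (M : Type) [AddCommGroup M] [Module Λ M] : Prop :=
  (0 : Module.End Λ M) ≠ 1 ∧ ∀ f : Module.End Λ M, f ≠ 0 → IsUnit f

/-- `X ∈ add T`. -/
def InAdd (T X : Type) [AddCommGroup T] [Module Λ T] [AddCommGroup X] [Module Λ X] : Prop :=
  ∃ (m : ℕ) (ι : X →ₗ[Λ] (Fin m → T)) (p : (Fin m → T) →ₗ[Λ] X), p.comp ι = LinearMap.id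

/-- A module is normal if in any decomposition `M ≅ M' ⊕ M''` with `M'` generating `M''`,
the summand `M''` vanishes. -/
def IsNormal (M : Type) [AddCommGroup M] [Module Λ M] : Prop :=
  ∀ (M' M'' : Type) [AddCommGroup M'] [Module Λ M'] [AddCommGroup M''] [Module Λ M''],
    Nonempty (M ≃ₗ[Λ] M' × M'') → Generates Λ M' M'' → Subsingleton M''

/-- `N` is a normalization of `M`. -/
def IsNormalization (M N : Type) [AddCommGroup M] [Module Λ M] [AddCommGroup N] [Module Λ N] :
    Prop :=
  IsNormal Λ N ∧ ∃ Y : ModuleCat.{0} Λ, Nonempty (M ≃ₗ[Λ] N × Y) ∧ Generates Λ N Y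

/-- An indecomposable (nonzero) module. -/
def Indec (M : Type) [AddCommGroup M] [Module Λ M] : Prop :=
  ¬ Subsingleton M ∧ ∀ (P Q : Type) [AddCommGroup P] [Module Λ P] [AddCommGroup Q] [Module Λ Q],
    Nonempty (M ≃ₗ[Λ] P × Q) → Subsingleton P ∨ Subsingleton Q

/-- `S` is a composition factor of `M` (a subquotient, which for simple `S` is the same). -/
def IsCompositionFactor (M S : Type) [AddCommGroup M] [Module Λ M] [AddCommGroup S]
    [Module Λ S] : Prop :=
  ∃ (B A : Submodule Λ M), A ≤ B ∧
    Nonempty ((B ⧸ Submodule.comap B.subtype A) ≃ₗ[Λ] S)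

/-- Every simple module occurs as a composition factor of `M`. -/
def IsSincere (M : Type) [AddCommGroup M] [Module Λ M] : Prop :=
  ∀ (S : Type) [AddCommGroup S] [Module Λ S], IsSimpleModule Λ S → IsCompositionFactor Λ M S

/-- Submodules of projective modules are projective. -/
def IsHereditaryRing : Prop :=
  ∀ (P : Type) [AddCommGroup P] [Module Λ P], Module.Projective Λ P →
    ∀ N : Submodule Λ P, Module.Projective Λ N

/-- A finite family of pairwise orthogonal bricks. -/
def IsAntichainFam (t : ℕ) (A : Fin t → Type) [∀ i, AddCommGroup (A i)]
    [∀ i, Module Λ (A i)] : Prop :=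
  (∀ i, IsBrick Λ (A i)) ∧ ∀ i j, i ≠ j → ∀ f : A i →ₗ[Λ] A j, f = 0

/-- The antichain is exceptional: it can be reindexed so that `Ext¹(A i, A j) = 0` for `i ≥ j`,
i.e. its Ext-quiver is acyclic. -/
def IsExceptionalFam (t : ℕ) (A : Fin t → Type) [∀ i, AddCommGroup (A i)]
    [∀ i, Module Λ (A i)] : Prop :=
  ∃ σ : Equiv.Perm (Fin t), ∀ i j : Fin t, j ≤ i → ExtVanish Λ (A (σ i)) (A (σ j))

/-- `M` has a finite filtration with successive quotients among the `A j`. -/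
def HasFiltration (t : ℕ) (A : Fin t → Type) [∀ i, AddCommGroup (A i)] [∀ i, Module Λ (A i)]
    (M : Type) [AddCommGroup M] [Module Λ M] : Prop :=
  ∃ (s : ℕ) (F : Fin (s + 1) → Submodule Λ M), Monotone F ∧ F 0 = ⊥ ∧ F (Fin.last s) = ⊤ ∧
    ∀ i : Fin s, ∃ j : Fin t,
      Nonempty ((F i.succ ⧸ Submodule.comap (F i.succ).subtype (F i.castSucc)) ≃ₗ[Λ] A j)

/-- The subcategory `F(A)` of modules filtered by the antichain `A`. -/
def FiltClass (t : ℕ) (A : Fin t → Type) [∀ i, AddCommGroup (A i)] [∀ i, Module Λ (A i)] :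
    Set (ModuleCat.{0} Λ) :=
  {M | HasFiltration Λ t A M}

/-- A thick subcategory of `mod Λ`: closed under isomorphisms, finite direct sums, direct
summands, kernels, cokernels and extensions. -/
structure IsThick (𝒜 : Set (ModuleCat.{0} Λ)) : Prop where
  respIso : ∀ M N : ModuleCat.{0} Λ, (M ≃ₗ[Λ] N) → M ∈ 𝒜 → N ∈ 𝒜
  zero : ModuleCat.of Λ PUnit ∈ 𝒜
  prod : ∀ M N : ModuleCat.{0} Λ, M ∈ 𝒜 → N ∈ 𝒜 → ModuleCat.of Λ (M × N) ∈ 𝒜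
  summand : ∀ (M N : ModuleCat.{0} Λ), M ∈ 𝒜 →
    (∃ (ι : N →ₗ[Λ] M) (p : M →ₗ[Λ] N), p.comp ι = LinearMap.id) → N ∈ 𝒜
  ker : ∀ (M N : ModuleCat.{0} Λ) (f : M →ₗ[Λ] N), M ∈ 𝒜 → N ∈ 𝒜 →
    ModuleCat.of Λ (LinearMap.ker f) ∈ 𝒜
  coker : ∀ (M N : ModuleCat.{0} Λ) (f : M →ₗ[Λ] N), M ∈ 𝒜 → N ∈ 𝒜 →
    ModuleCat.of Λ (N ⧸ LinearMap.range f) ∈ 𝒜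
  extClosed : ∀ (M E N : ModuleCat.{0} Λ) (f : M →ₗ[Λ] E) (g : E →ₗ[Λ] N),
    Function.Injective f → Function.Surjective g → LinearMap.range f = LinearMap.ker g →
    M ∈ 𝒜 → N ∈ 𝒜 → E ∈ 𝒜

/-- A simple object of the (abelian) subcategory `𝒜`. -/
def IsSimpleIn (𝒜 : Set (ModuleCat.{0} Λ)) (M : ModuleCat.{0} Λ) : Prop :=
  M ∈ 𝒜 ∧ ¬ Subsingleton M ∧
    ∀ N : Submodule Λ M, ModuleCat.of Λ N ∈ 𝒜 → N = ⊥ ∨ N = ⊤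

/-- `C` is a cover of the subcategory `𝒜`. -/
def IsCoverOf (𝒜 : Set (ModuleCat.{0} Λ)) (C : ModuleCat.{0} Λ) : Prop :=
  C ∈ 𝒜 ∧ ∀ M ∈ 𝒜, Generates Λ C M

/-- `C` is a cocover of the subcategory `𝒜`. -/
def IsCocoverOf (𝒜 : Set (ModuleCat.{0} Λ)) (C : ModuleCat.{0} Λ) : Prop :=
  C ∈ 𝒜 ∧ ∀ M ∈ 𝒜, Cogenerates Λ C M

/-- A torsion class: a class of modules closed under quotients and extensions. -/
def IsTorsionClass (𝒞 : Set (ModuleCat.{0} Λ)) : Prop :=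
  (∀ M ∈ 𝒞, ∀ (N : ModuleCat.{0} Λ) (f : M →ₗ[Λ] N), Function.Surjective f → N ∈ 𝒞) ∧
  (∀ (M E N : ModuleCat.{0} Λ) (f : M →ₗ[Λ] E) (g : E →ₗ[Λ] N),
    Function.Injective f → Function.Surjective g → LinearMap.range f = LinearMap.ker g →
    M ∈ 𝒞 → N ∈ 𝒞 → E ∈ 𝒞)

/-- `𝒢(T)`: the (finite length) modules generated by `T`. -/
def GenClass (T : Type) [AddCommGroup T] [Module Λ T] : Set (ModuleCat.{0} Λ) :=
  {M | IsFiniteLength Λ M ∧ Generates Λ T M}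

/-- Membership in the two-sided ideal of `Λ` generated by the idempotents annihilating `M`. -/
def InSupportIdeal (M : Type) [AddCommGroup M] [Module Λ M] (a : Λ) : Prop :=
  ∃ (n : ℕ) (x y e : Fin n → Λ),
    (∀ i, IsIdempotentElem (e i) ∧ ∀ m : M, e i • m = 0) ∧ a = ∑ i, x i * e i * y i

end Defs

/-- `T` is a tilting `R`-module: no self-extensions, and `R` is the kernel of a surjective
map in `add T`. -/
def IsTiltingMod (R : Type) [Ring R] (T : Type) [AddCommGroup T] [Module R T] : Prop :=
  ExtVanish R T T ∧
    ∃ X Y : ModuleCat.{0} R, InAdd R T X ∧ InAdd R T Y ∧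
      ∃ (f : R →ₗ[R] X) (g : X →ₗ[R] Y),
        Function.Injective f ∧ Function.Surjective g ∧ LinearMap.range f = LinearMap.ker g

/-- `T` is support-tilting: `T` is a tilting module over its support algebra `Λ(T)`
(presented as any quotient of `Λ` by the ideal generated by the idempotents killing `T`). -/
def IsSupportTilting (Λ : Type) [Ring Λ] (T : Type) [AddCommGroup T] [Module Λ T] : Prop :=
  ∀ (R : Type) [Ring R] (π : Λ →+* R), Function.Surjective π →
    (∀ a : Λ, π a = 0 ↔ InSupportIdeal Λ T a) →
    ∀ [Module R T], (∀ (a : Λ) (x : T), a • x = π a • x) → IsTiltingMod R T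

section MoreDefs
variable (Λ : Type) [Ring Λ]

/-- A factor complement `Y` for `N`: `Y` is generated by `N` and `N ⊕ Y` is support-tilting. -/
def IsFactorComplement (N Y : Type) [AddCommGroup N] [Module Λ N] [AddCommGroup Y]
    [Module Λ Y] : Prop :=
  Generates Λ N Y ∧ IsSupportTilting Λ (N × Y)

/-- A minimal factor complement: a factor complement all of whose factor-complement direct
summands are Morita equivalent to it. -/
def IsMinimalFactorComplement (N Y : Type) [AddCommGroup N] [Module Λ N] [AddCommGroup Y]
    [Module Λ Y] : Prop :=
  IsFactorComplement Λ N Y ∧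
    ∀ Y' : ModuleCat.{0} Λ, InAdd Λ Y Y' → IsFactorComplement Λ N Y' → InAdd Λ Y' Y

/-- `Λ` is representation-finite. -/
def IsRepFinite : Prop :=
  ∃ (t : ℕ) (R : Fin t → ModuleCat.{0} Λ),
    ∀ M : ModuleCat.{0} Λ, IsFiniteLength Λ M → Indec Λ M → ∃ i, Nonempty (M ≃ₗ[Λ] R i)

end MoreDefs
section ExtraDefs
variable (Λ : Type) [Ring Λ]

/-- `X ∈ add {Nf j : j ∈ S}`. -/
def InAddFam (t : ℕ) (Nf : Fin t → Type) [∀ i, AddCommGroup (Nf i)] [∀ i, Module Λ (Nf i)]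
    (S : Set (Fin t)) (X : Type) [AddCommGroup X] [Module Λ X] : Prop :=
  ∃ (m : ℕ) (c : Fin m → Fin t), (∀ a, c a ∈ S) ∧
    ∃ (ι : X →ₗ[Λ] ∀ a, Nf (c a)) (p : (∀ a, Nf (c a)) →ₗ[Λ] X), p.comp ι = LinearMap.id

/-- `X` is killed by the support ideal of `N`, i.e. `X` is a module over the
support algebra `Λ(N)`. -/
def KilledBySupportIdeal (N X : Type) [AddCommGroup N] [Module Λ N] [AddCommGroup X]
    [Module Λ X] : Prop :=
  ∀ a : Λ, InSupportIdeal Λ N a → ∀ x : X, a • x = 0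

end ExtraDefs

/-- An equivalence (automatically exact) between the abelian category `𝒜` and the category
of finite length modules over an artin algebra `B`. -/
structure ArtinAlgebraModel (Λ : Type) [Ring Λ] (𝒜 : Set (ModuleCat.{0} Λ)) where
  k' : Type
  [ck' : CommRing k']
  [ak' : IsArtinianRing k']
  B : Type
  [rB : Ring B]
  [algB : Algebra k' B]
  flB : IsFiniteLength k' B
  equiv : CategoryTheory.ObjectProperty.FullSubcategory (fun M : ModuleCat.{0} Λ => M ∈ 𝒜) ≌
    CategoryTheory.ObjectProperty.FullSubcategory (fun M : ModuleCat.{0} B => IsFiniteLength B M)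

/-- The hom-space from `x` to `y` in the linearization `kP` of a poset `P` over a field `k`:
it is `k` if `x ≤ y` and `0` otherwise; composition is multiplication in `k`. -/
def pHom (kk P : Type) [Field kk] [PartialOrder P] (x y : P) : Type :=
  {c : kk // ¬ x ≤ y → c = 0}




section AuxProofs

lemma extVanish_pi {Λ M : Type} [Ring Λ] [AddCommGroup M] [Module Λ M]
    (hself : ExtVanish Λ M M) (ι : Type) [Fintype ι] [DecidableEq ι] :
    ExtVanish Λ (ι → M) M := by
  intro E _ _ f g hf hg hfg
  have hgf : ∀ m, g (f m) = 0 := by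
    intro m
    rw [← LinearMap.mem_ker, ← hfg]
    exact ⟨m, rfl⟩
  -- the submodule of elements supported at coordinate i
  have key : ∀ i : ι, ∃ s : M →ₗ[Λ] E,
      (∀ m, ∀ j, j ≠ i → g (s m) j = 0) ∧ (∀ m, g (s m) i = m) := by
    intro i
    let Ei : Submodule Λ E :=
      { carrier := {e | ∀ j, j ≠ i → g e j = 0}
        add_mem' := fun {a b} ha hb j hj => by simp [map_add, ha j hj, hb j hj]
        zero_mem' := fun j hj => by simp
        smul_mem' := fun c a ha j hj => by simp [map_smul, ha j hj] }
    have hfi : ∀ m, f m ∈ Ei := fun m j _ => by rw [hgf m]; rfl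
    let fi : M →ₗ[Λ] Ei := f.codRestrict Ei hfi
    let gi : Ei →ₗ[Λ] M := (LinearMap.proj i).comp (g.comp Ei.subtype)
    have hfi_inj : Function.Injective fi := by
      intro a b h
      exact hf (congrArg Subtype.val h)
    have hgi_surj : Function.Surjective gi := by
      intro m
      obtain ⟨e, he⟩ := hg (Pi.single (M := fun _ : ι => M) i m)
      refine ⟨⟨e, fun j hj => by rw [he]; exact Pi.single_eq_of_ne (M := fun _ : ι => M) hj m⟩, ?_⟩
      show g e i = m
      rw [he]; exact Pi.single_eq_same (M := fun _ : ι => M) i m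
    have hrk : LinearMap.range fi = LinearMap.ker gi := by
      ext e
      constructor
      · rintro ⟨m, rfl⟩
        show g (f m) i = 0
        rw [hgf m]; rfl
      · intro he
        have h0 : g e.val = 0 := by
          funext j
          by_cases hj : j = i
          · subst hj; exact he
          · exact e.2 j hj
        have : (e : E) ∈ LinearMap.ker g := h0
        rw [← hfg] at this
        obtain ⟨m, hm⟩ := this
        exact ⟨m, Subtype.ext hm⟩
    obtain ⟨s, hs⟩ := hself Ei fi gi hfi_inj hgi_surj hrk
    refine ⟨Ei.subtype.comp s, fun m j hj => (s m).2 j hj, fun m => ?_⟩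
    have := congrArg (fun h => h m) (congrArg DFunLike.coe hs)
    exact this
  choose s hs0 hs1 using key
  refine ⟨∑ i : ι, (s i).comp (LinearMap.proj i), ?_⟩
  apply LinearMap.ext; intro ν; funext j
  show g ((∑ i : ι, (s i).comp (LinearMap.proj i)) ν) j = ν j
  rw [LinearMap.sum_apply, map_sum]
  rw [Finset.sum_apply]
  rw [Finset.sum_eq_single j]
  · exact hs1 j (ν j)
  · intro i _ hij
    exact hs0 i (ν i) j (Ne.symm hij) -- careful direction
  · intro h; exact absurd (Finset.mem_univ j) h

lemma exists_finset_ann {Λ M : Type} [Ring Λ] [AddCommGroup M] [Module Λ M]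
    [IsArtinian Λ Λ] :
    ∃ t : Finset M, ∀ a : Λ, (∀ i : ↥t, a • (i : M) = 0) ↔ (∀ m : M, a • m = 0) := by
  classical
  set ann : M → Submodule Λ Λ := fun m => LinearMap.ker (LinearMap.toSpanSingleton Λ M m) with hann
  obtain ⟨J₀, ⟨t, ht⟩, hmin⟩ := IsArtinian.set_has_minimal
    {J : Submodule Λ Λ | ∃ t : Finset M, J = t.inf ann} ⟨⊤, ∅, by simp⟩
  have hJle : ∀ m : M, J₀ ≤ ann m := by
    intro m
    by_contra hc
    have h1 : J₀ ⊓ ann m < J₀ := lt_of_le_of_ne inf_le_left (by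
      intro h
      exact hc (h ▸ inf_le_right))
    exact hmin (J₀ ⊓ ann m) ⟨insert m t, by rw [Finset.inf_insert, ht, inf_comm]⟩ h1
  refine ⟨t, fun a => ⟨fun h m => ?_, fun h i => h i⟩⟩
  have haJ : a ∈ J₀ := by
    rw [ht, Submodule.mem_finsetInf]
    intro i hi
    exact h ⟨i, hi⟩
  exact hJle m haJ

lemma hom_ann_zero (k : Type) [CommRing k] [IsArtinianRing k]
    (Λ : Type) [Ring Λ] [Algebra k Λ] (hart : IsFiniteLength k Λ)
    (hher : IsHereditaryRing Λ)
    (M : Type) [AddCommGroup M] [Module Λ M] (hMfl : IsFiniteLength Λ M)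
    (hself : ExtVanish Λ M M)
    (I : Submodule Λ Λ) (hI : ∀ a : Λ, a ∈ I ↔ ∀ m : M, a • m = 0)
    (f : ↥I →ₗ[Λ] M) : f = 0 := by
  classical
  haveI hArtk : IsArtinian k Λ := (isFiniteLength_iff_isNoetherian_isArtinian.mp hart).2
  haveI : IsArtinian Λ Λ := isArtinian_of_tower k hArtk
  haveI : IsNoetherian Λ M := (isFiniteLength_iff_isNoetherian_isArtinian.mp hMfl).1
  obtain ⟨t, ht⟩ := exists_finset_ann (Λ := Λ) (M := M)
  set cMap : Λ →ₗ[Λ] (↥t → M) :=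
    LinearMap.pi (fun i : ↥t => LinearMap.toSpanSingleton Λ M i.val) with hcMap
  have hker : ∀ a : Λ, cMap a = 0 ↔ a ∈ I := by
    intro a
    rw [hI]
    rw [← ht a]
    constructor
    · intro h i
      exact congrFun h i
    · intro h
      funext i
      exact h i
  -- the pushout D of f along I ↪ Λ
  set W : Submodule Λ (Λ × M) := LinearMap.range (LinearMap.prod I.subtype (-f)) with hW
  set c' : Λ × M →ₗ[Λ] (↥t → M) := cMap.comp (LinearMap.fst Λ Λ M) with hc'
  have hWc : W ≤ LinearMap.ker c' := by
    rintro z ⟨i, rfl⟩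
    show cMap i.val = 0
    exact (hker _).mpr i.2
  set cbar : ((Λ × M) ⧸ W) →ₗ[Λ] (↥t → M) := Submodule.liftQ W c' hWc with hcbar
  set ι' : M →ₗ[Λ] ((Λ × M) ⧸ W) := W.mkQ.comp (LinearMap.inr Λ Λ M) with hι'
  have hι'inj : Function.Injective ι' := by
    intro a b hab
    have hab' : W.mkQ ((0:Λ), a) = W.mkQ ((0:Λ), b) := hab
    rw [Submodule.mkQ_apply, Submodule.mkQ_apply, Submodule.Quotient.eq] at hab'
    obtain ⟨i, hi⟩ := hab'
    have h1 : i.val = 0 := by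
      have := congrArg Prod.fst hi
      simpa using this
    have h2 : i = 0 := Subtype.ext h1
    have h3 := congrArg Prod.snd hi
    rw [h2] at h3
    simp only [map_zero] at h3
    have : (0 : M) = a - b := by simpa using h3
    rw [← sub_eq_zero]
    exact this.symm
  have hcbar_mk : ∀ z : Λ × M, cbar (W.mkQ z) = cMap z.1 := fun z => rfl
  have hcbar_range : ∀ d : (Λ × M) ⧸ W, cbar d ∈ LinearMap.range cMap := by
    intro d
    obtain ⟨z, rfl⟩ := W.mkQ_surjective d
    exact ⟨z.1, rfl⟩
  have hkercbar : ∀ d : (Λ × M) ⧸ W, cbar d = 0 → ∃ m : M, ι' m = d := by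
    intro d hd
    obtain ⟨z, rfl⟩ := W.mkQ_surjective d
    have hz : z.1 ∈ I := (hker z.1).mp (by rw [← hcbar_mk z]; exact hd)
    refine ⟨z.2 + f ⟨z.1, hz⟩, ?_⟩
    show W.mkQ (0, z.2 + f ⟨z.1, hz⟩) = W.mkQ z
    rw [Submodule.mkQ_apply, Submodule.mkQ_apply, Submodule.Quotient.eq]
    refine ⟨-⟨z.1, hz⟩, ?_⟩
    show (I.subtype (-⟨z.1, hz⟩), (-f) (-⟨z.1, hz⟩)) = (0,  z.2 + f ⟨z.1, hz⟩) - z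
    simp only [map_neg, LinearMap.neg_apply, neg_neg, Submodule.coe_subtype]
    show ((-(z.1)), f ⟨z.1, hz⟩) = ((0 : Λ) - z.1, z.2 + f ⟨z.1, hz⟩ - z.2)
    simp [Prod.ext_iff]
  -- finite generation of N and a free cover
  obtain ⟨r, α, hα⟩ := Module.Finite.exists_fin' Λ (↥t → M)
  set K : Submodule Λ (Fin r → Λ) := Submodule.comap α (LinearMap.range cMap) with hK
  haveI hKproj : Module.Projective Λ ↥K := hher (Fin r → Λ) inferInstance K
  set g0 : ↥K →ₗ[Λ] ↥(LinearMap.range cMap) :=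
    LinearMap.codRestrict _ (α.comp K.subtype) (fun x => x.2) with hg0
  obtain ⟨β, hβ⟩ := Module.projective_lifting_property cMap.rangeRestrict g0
    cMap.surjective_rangeRestrict
  have hβ' : ∀ x : ↥K, cMap (β x) = α x.val := by
    intro x
    have := congrArg Subtype.val (LinearMap.congr_fun hβ x)
    exact this
  set Γ : ((Λ × M) ⧸ W) × (Fin r → Λ) →ₗ[Λ] (↥t → M) :=
    cbar.comp (LinearMap.fst Λ _ _) + α.comp (LinearMap.snd Λ _ _) with hΓ
  have hΓ_apply : ∀ z : ((Λ × M) ⧸ W) × (Fin r → Λ), Γ z = cbar z.1 + α z.2 := fun z => rfl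
  have hΓsurj : Function.Surjective Γ := by
    intro n
    obtain ⟨x, hx⟩ := hα n
    exact ⟨(0, x), by rw [hΓ_apply]; simp [hx]⟩
  set KΓ := LinearMap.ker Γ with hKΓ
  have hpr_mem : ∀ z : ↥KΓ, z.val.2 ∈ K := by
    intro z
    have hz : cbar z.val.1 + α z.val.2 = 0 := z.2
    show α z.val.2 ∈ LinearMap.range cMap
    have : α z.val.2 = -cbar z.val.1 := by
      rw [eq_neg_iff_add_eq_zero, add_comm]; exact hz
    rw [this]
    exact neg_mem (hcbar_range z.val.1)
  set pr : ↥KΓ →ₗ[Λ] ↥K :=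
    LinearMap.codRestrict K ((LinearMap.snd Λ _ _).comp KΓ.subtype) hpr_mem with hpr
  have hpr_surj : Function.Surjective pr := by
    intro x
    have hmem : (W.mkQ ((-(β x) : Λ), (0:M)), x.val) ∈ KΓ := by
      rw [hKΓ, LinearMap.mem_ker, hΓ_apply]
      show cbar (W.mkQ _) + α x.val = 0
      rw [hcbar_mk]
      show cMap (-(β x)) + α x.val = 0
      rw [map_neg, hβ' x]
      simp
    exact ⟨⟨_, hmem⟩, rfl⟩
  obtain ⟨τ, hτ⟩ := Module.projective_lifting_property pr LinearMap.id hpr_surj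
  have hτ' : ∀ x : ↥K, pr (τ x) = x := fun x => LinearMap.congr_fun hτ x
  set T : Submodule Λ (((Λ × M) ⧸ W) × (Fin r → Λ)) :=
    LinearMap.range (KΓ.subtype.comp τ) with hT
  have hTker : T ≤ LinearMap.ker Γ := by
    rintro z ⟨x, rfl⟩
    exact (τ x).2
  set Γbar : ((((Λ × M) ⧸ W) × (Fin r → Λ)) ⧸ T) →ₗ[Λ] (↥t → M) :=
    Submodule.liftQ T Γ hTker with hΓbar
  set jhat : M →ₗ[Λ] ((((Λ × M) ⧸ W) × (Fin r → Λ)) ⧸ T) :=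
    T.mkQ.comp ((LinearMap.inl Λ _ _).comp ι') with hjhat
  have hjhat_apply : ∀ m : M, jhat m = T.mkQ (ι' m, 0) := fun m => rfl
  have hjinj : Function.Injective jhat := by
    intro a b hab
    have h1 : T.mkQ (ι' a, 0) = T.mkQ (ι' b, 0) := hab
    rw [Submodule.mkQ_apply, Submodule.mkQ_apply, Submodule.Quotient.eq] at h1
    obtain ⟨x, hx⟩ := h1
    have h2 : (τ x).val = (ι' a - ι' b, 0) := by
      rw [show ((ι' a - ι' b, (0 : Fin r → Λ))) = (ι' a, (0 : Fin r → Λ)) - (ι' b, 0) by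
        simp [Prod.ext_iff], ← hx]
      rfl
    have h3 : pr (τ x) = x := hτ' x
    have h4 : x.val = (0 : Fin r → Λ) := by
      rw [← h3]
      show (τ x).val.2 = 0
      rw [h2]
    have h5 : x = 0 := Subtype.ext h4
    rw [h5, map_zero] at h2
    have h6 : ι' a - ι' b = 0 := (congrArg Prod.fst h2.symm)
    apply hι'inj
    rw [← sub_eq_zero]
    exact h6
  have hΓbar_mk : ∀ z, Γbar (T.mkQ z) = Γ z := fun z => rfl
  have hΓbar_surj : Function.Surjective Γbar := by
    intro n
    obtain ⟨z, hz⟩ := hΓsurj n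
    exact ⟨T.mkQ z, by rw [hΓbar_mk, hz]⟩
  have hrange : LinearMap.range jhat = LinearMap.ker Γbar := by
    apply le_antisymm
    · rintro e ⟨m, rfl⟩
      rw [LinearMap.mem_ker, hjhat_apply, hΓbar_mk, hΓ_apply]
      show cbar (W.mkQ (0, m)) + α 0 = 0
      rw [hcbar_mk, map_zero, map_zero, add_zero]
    · intro e he
      obtain ⟨z, rfl⟩ := T.mkQ_surjective e
      have hz : Γ z = 0 := by rw [LinearMap.mem_ker, hΓbar_mk] at he; exact he
      set zz : ↥KΓ := ⟨z, hz⟩ with hzz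
      set w : ↥KΓ := zz - τ (pr zz) with hw
      have hw2 : w.val.2 = 0 := by
        have : pr w = 0 := by rw [hw, map_sub, hτ' (pr zz), sub_self]
        exact congrArg Subtype.val this
      have hw1 : cbar w.val.1 = 0 := by
        have hΓw : Γ w.val = 0 := w.2
        rw [hΓ_apply, hw2, map_zero, add_zero] at hΓw
        exact hΓw
      obtain ⟨m, hm⟩ := hkercbar w.val.1 hw1
      refine ⟨m, ?_⟩
      rw [hjhat_apply]
      have : w.val = (ι' m, (0 : Fin r → Λ)) := Prod.ext hm.symm hw2
      rw [Submodule.mkQ_apply, Submodule.mkQ_apply, Submodule.Quotient.eq]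
      rw [← this]
      have : w.val - z = -(τ (pr zz)).val := by
        rw [hw]
        show zz.val - (τ (pr zz)).val - z = _
        rw [hzz]
        simp
      rw [this]
      exact neg_mem ⟨pr zz, rfl⟩
  -- split the extension over the product module
  obtain ⟨sct, hsct⟩ := extVanish_pi hself (↥t) _ jhat Γbar hjinj hΓbar_surj hrange
  have hsct' : ∀ n, Γbar (sct n) = n := fun n => LinearMap.congr_fun hsct n
  set ρ := LinearMap.id (R := Λ) (M := ((((Λ × M) ⧸ W) × (Fin r → Λ)) ⧸ T)) - sct.comp Γbar with hρ
  have hρmem : ∀ e, ρ e ∈ LinearMap.range jhat := by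
    intro e
    rw [hrange, LinearMap.mem_ker]
    show Γbar (e - sct (Γbar e)) = 0
    rw [map_sub, hsct', sub_self]
  set req := LinearEquiv.ofInjective jhat hjinj with hreq
  set rr : ((((Λ × M) ⧸ W) × (Fin r → Λ)) ⧸ T) →ₗ[Λ] M :=
    (req.symm.toLinearMap).comp (ρ.codRestrict (LinearMap.range jhat) hρmem) with hrr
  have hjr : ∀ e, jhat (rr e) = ρ e := by
    intro e
    have h1 : req (rr e) = ⟨ρ e, hρmem e⟩ := by
      rw [hrr]
      exact req.apply_symm_apply _
    have := congrArg Subtype.val h1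
    rwa [hreq, LinearEquiv.ofInjective_apply] at this
  have hrj : ∀ m, rr (jhat m) = m := by
    intro m
    apply hjinj
    rw [hjr]
    show jhat m - sct (Γbar (jhat m)) = jhat m
    have : Γbar (jhat m) = 0 := by
      rw [← LinearMap.mem_ker, ← hrange]; exact ⟨m, rfl⟩
    rw [this, map_zero, sub_zero]
  -- the extension of f to Λ
  set φ : Λ →ₗ[Λ] M :=
    rr.comp (T.mkQ.comp ((LinearMap.inl Λ _ _).comp (W.mkQ.comp (LinearMap.inl Λ Λ M)))) with hφ
  have hφsmul : ∀ a : Λ, φ a = a • φ 1 := by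
    intro a
    conv_lhs => rw [show a = a • (1:Λ) by simp]
    rw [map_smul]
  have hφI : ∀ i : ↥I, φ i.val = f i := by
    intro i
    have key : W.mkQ (i.val, (0:M)) = ι' (f i) := by
      show W.mkQ (i.val, (0:M)) = W.mkQ (0, f i)
      rw [Submodule.mkQ_apply, Submodule.mkQ_apply, Submodule.Quotient.eq]
      exact ⟨i, by simp [Prod.ext_iff]⟩
    show rr (T.mkQ (W.mkQ (i.val, (0:M)), 0)) = f i
    rw [key]
    show rr (jhat (f i)) = f i
    exact hrj (f i)
  ext i
  show f i = 0
  rw [← hφI i, hφsmul]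
  exact (hI i.val).mp i.2 (φ 1)

end AuxProofs

/-- A sincere module without self-extensions over a hereditary artin algebra is faithful. -/
theorem stmt0 (k : Type) [CommRing k] [IsArtinianRing k]
    (Λ : Type) [Ring Λ] [Algebra k Λ] (hart : IsFiniteLength k Λ)
    (hher : IsHereditaryRing Λ)
    (M : Type) [AddCommGroup M] [Module Λ M] (hMfl : IsFiniteLength Λ M)
    (hself : ExtVanish Λ M M) (hsin : IsSincere Λ M) :
    ∀ a : Λ, (∀ m : M, a • m = 0) → a = 0 := by
  classical
  set I : Submodule Λ Λ :=
    { carrier := {a | ∀ m : M, a • m = 0}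
      add_mem' := fun {a b} ha hb m => by rw [add_smul, ha m, hb m, add_zero]
      zero_mem' := fun m => zero_smul Λ m
      smul_mem' := fun c a ha m => by
        show (c * a) • m = 0
        rw [mul_smul, ha m, smul_zero] } with hIdef
  have hI : ∀ a : Λ, a ∈ I ↔ ∀ m : M, a • m = 0 := fun a => Iff.rfl
  intro a ha
  by_contra hane
  have haI : a ∈ I := (hI a).mpr ha
  haveI : Nontrivial ↥I := ⟨⟨a, haI⟩, 0, fun hh => hane (congrArg Subtype.val hh)⟩
  haveI hNoethk : IsNoetherian k Λ := (isFiniteLength_iff_isNoetherian_isArtinian.mp hart).1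
  haveI : IsNoetherian Λ Λ := isNoetherian_of_tower k hNoethk
  haveI : IsNoetherian Λ ↥I := inferInstance
  -- a maximal proper submodule of I
  obtain ⟨C, hCne, hCmax⟩ := set_has_maximal_iff_noetherian.mpr (inferInstance : IsNoetherian Λ ↥I)
    {C : Submodule Λ ↥I | C ≠ ⊤} ⟨⊥, bot_ne_top⟩
  have hcoatom : IsCoatom C := by
    refine ⟨hCne, fun J hCJ => ?_⟩
    by_contra hJ
    exact hCmax J hJ hCJ
  haveI hsimple : IsSimpleModule Λ (↥I ⧸ C) := isSimpleModule_iff_isCoatom.mpr hcoatom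
  obtain ⟨B, A, hAB, ⟨e⟩⟩ := hsin (↥I ⧸ C) hsimple
  set A' := Submodule.comap B.subtype A with hA'
  set g : ↥I →ₗ[Λ] (↥B ⧸ A') := (e.symm.toLinearMap).comp C.mkQ with hg
  haveI hIproj : Module.Projective Λ ↥I := hher Λ inferInstance I
  obtain ⟨h, hh⟩ := Module.projective_lifting_property A'.mkQ g (Submodule.mkQ_surjective A')
  set fI : ↥I →ₗ[Λ] M := B.subtype.comp h with hfI
  have hzero : fI = 0 := hom_ann_zero k Λ hart hher M hMfl hself I hI fI
  have hC_top : C = ⊤ := by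
    rw [eq_top_iff]
    intro x _
    have h1 : (h x).val = 0 := by
      have := LinearMap.congr_fun hzero x
      exact this
    have h2 : h x = 0 := Subtype.ext h1
    have h3 : g x = 0 := by
      rw [← LinearMap.congr_fun hh x]
      show A'.mkQ (h x) = 0
      rw [h2, map_zero]
    have h4 : e.symm (C.mkQ x) = 0 := h3
    have h5 : C.mkQ x = 0 := by
      have := congrArg e h4
      rwa [LinearEquiv.apply_symm_apply, map_zero] at this
    rwa [Submodule.mkQ_apply, Submodule.Quotient.mk_eq_zero] at h5
  exact hCne hC_top
end

section
/- Let Λ be a hereditary artin algebra and N = ⊕ᵢ Nᵢ a normal module without self-extensions, with the Nᵢ indecomposable. For each i let uᵢ : Uᵢ → Nᵢ be a minimal right add({N_j : j ≠ i})-approximation. Then uᵢ is injective and not surjective, and its cokernel Δ(i) is a nonzero brick. -/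
open CategoryTheory

section Stmt3Helpers

variable {Λ : Type} [Ring Λ]

/-- Extension property: every map from `ker ρ` to `V` extends to `P`;
this encodes `Ext¹(X, V) = 0` via the presentation `ρ : P → X`. -/
def ExtProp (Λ : Type) [Ring Λ] {P X : Type} [AddCommGroup P] [Module Λ P]
    [AddCommGroup X] [Module Λ X] (ρ : P →ₗ[Λ] X)
    (V : Type) [AddCommGroup V] [Module Λ V] : Prop :=
  ∀ h : ↥(LinearMap.ker ρ) →ₗ[Λ] V, ∃ g : P →ₗ[Λ] V,
    ∀ ω : ↥(LinearMap.ker ρ), g ↑ω = h ω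

theorem factor_through {P X V : Type} [AddCommGroup P] [Module Λ P] [AddCommGroup X]
    [Module Λ X] [AddCommGroup V] [Module Λ V] (ρ : P →ₗ[Λ] X) (hρ : Function.Surjective ρ)
    (μ : P →ₗ[Λ] V) (h : LinearMap.ker ρ ≤ LinearMap.ker μ) :
    ∃ δ : X →ₗ[Λ] V, ∀ p, δ (ρ p) = μ p := by
  refine ⟨(Submodule.liftQ (LinearMap.ker ρ) μ h).comp
    (ρ.quotKerEquivOfSurjective hρ).symm.toLinearMap, fun p => ?_⟩
  have h1 : (ρ.quotKerEquivOfSurjective hρ).symm (ρ p) = Submodule.Quotient.mk p := by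
    apply (ρ.quotKerEquivOfSurjective hρ).injective
    rw [LinearEquiv.apply_symm_apply]
    rfl
  simp [h1]

theorem extVanish_retract_left {M M' N : Type} [AddCommGroup M] [Module Λ M]
    [AddCommGroup M'] [Module Λ M'] [AddCommGroup N] [Module Λ N]
    (hev : ExtVanish Λ M N) (ι : M' →ₗ[Λ] M) (r : M →ₗ[Λ] M')
    (hri : ∀ x, r (ι x) = x) : ExtVanish Λ M' N := by
  intro E _ _ f g hf hg hfg
  set q : (E × M) →ₗ[Λ] M' := (g.comp (LinearMap.fst Λ E M)) - (r.comp (LinearMap.snd Λ E M))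
    with hq
  have hmem : ∀ z : E × M, z ∈ LinearMap.ker q ↔ g z.1 = r z.2 := by
    intro z; rw [LinearMap.mem_ker]; simp [hq, sub_eq_zero]
  let f' : N →ₗ[Λ] ↥(LinearMap.ker q) := LinearMap.codRestrict _ ((LinearMap.inl Λ E M).comp f)
    (fun n => (hmem _).2 (by
      have : f n ∈ LinearMap.ker g := hfg ▸ LinearMap.mem_range_self f n
      simpa using this))
  let g' : ↥(LinearMap.ker q) →ₗ[Λ] M := (LinearMap.snd Λ E M).comp (LinearMap.ker q).subtype
  have hf' : Function.Injective f' := by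
    rw [injective_iff_map_eq_zero]
    intro n hn
    have h1 : ((f n, 0) : E × M) = 0 := congrArg Subtype.val hn
    exact hf (by simpa using congrArg Prod.fst h1)
  have hg' : Function.Surjective g' := by
    intro m
    obtain ⟨e, he⟩ := hg (r m)
    exact ⟨⟨(e, m), (hmem _).2 he⟩, rfl⟩
  have hr' : LinearMap.range f' = LinearMap.ker g' := by
    apply le_antisymm
    · rintro _ ⟨n, rfl⟩
      simp [g', f', LinearMap.mem_ker]
    · rintro ⟨⟨e, m⟩, hz⟩ hz2
      have hm : m = 0 := hz2
      have hge : g e = 0 := by rw [(hmem _).1 hz, hm, map_zero]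
      obtain ⟨n, hn⟩ := (hfg ▸ (LinearMap.mem_ker.2 hge) : e ∈ LinearMap.range f)
      exact ⟨n, Subtype.ext (by simp [f', hn, hm])⟩
  obtain ⟨s, hs⟩ := hev _ f' g' hf' hg' hr'
  refine ⟨((LinearMap.fst Λ E M).comp (LinearMap.ker q).subtype).comp (s.comp ι),
    LinearMap.ext fun m' => ?_⟩
  have h2 : g' (s (ι m')) = ι m' := by
    have := congrArg (fun φ => φ (ι m')) (congrArg DFunLike.coe hs)
    simpa using this
  have h3 := (hmem _).1 (s (ι m')).2
  simp only [LinearMap.comp_apply, LinearMap.id_apply, LinearMap.fst_apply, Submodule.subtype_apply]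
  rw [h3]
  have h4 : ((s (ι m') : E × M)).2 = ι m' := h2
  rw [h4, hri]

theorem extProp_of_extVanish {P X V : Type} [AddCommGroup P] [Module Λ P] [AddCommGroup X]
    [Module Λ X] [AddCommGroup V] [Module Λ V] (ρ : P →ₗ[Λ] X) (hρ : Function.Surjective ρ)
    (hev : ExtVanish Λ X V) : ExtProp Λ ρ V := by
  intro h
  let W : Submodule Λ (V × P) := LinearMap.range (h.prod (LinearMap.ker ρ).subtype)
  let f : V →ₗ[Λ] ((V × P) ⧸ W) := W.mkQ.comp (LinearMap.inl Λ V P)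
  have hker : W ≤ LinearMap.ker (ρ.comp (LinearMap.snd Λ V P)) := by
    rintro z ⟨ω, rfl⟩
    have : ρ ↑ω = 0 := ω.2
    simp [LinearMap.mem_ker, this]
  let g' : ((V × P) ⧸ W) →ₗ[Λ] X := Submodule.liftQ W (ρ.comp (LinearMap.snd Λ V P)) hker
  have hg'mk : ∀ z : V × P, g' (W.mkQ z) = ρ z.2 := fun z => rfl
  have hf : Function.Injective f := by
    rw [injective_iff_map_eq_zero]
    intro v hv
    have h1 : ((v, 0) : V × P) ∈ W := (Submodule.Quotient.mk_eq_zero W).1 hv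
    obtain ⟨ω, hω⟩ := h1
    have h2 : (↑ω : P) = 0 := congrArg Prod.snd hω
    have h3 : ω = 0 := Subtype.ext h2
    rw [← (show h ω = v from congrArg Prod.fst hω), h3, map_zero]
  have hg : Function.Surjective g' := by
    intro x
    obtain ⟨p, hp⟩ := hρ x
    exact ⟨W.mkQ (0, p), by rw [hg'mk]; exact hp⟩
  have hrange : LinearMap.range f = LinearMap.ker g' := by
    apply le_antisymm
    · rintro _ ⟨v, rfl⟩
      rw [LinearMap.mem_ker]
      show g' (W.mkQ (v, 0)) = 0
      rw [hg'mk]; simp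
    · rintro z hz
      obtain ⟨⟨v, p⟩, rfl⟩ := W.mkQ_surjective z
      have hp : p ∈ LinearMap.ker ρ := by
        have := LinearMap.mem_ker.1 hz
        rw [hg'mk] at this
        exact this
      refine ⟨v - h ⟨p, hp⟩, ?_⟩
      show W.mkQ (v - h ⟨p, hp⟩, 0) = W.mkQ (v, p)
      rw [Submodule.mkQ_apply, Submodule.mkQ_apply, Submodule.Quotient.eq]
      exact ⟨-⟨p, hp⟩, by simp⟩
  obtain ⟨s, hs⟩ := hev _ f g' hf hg hrange
  have hsap : ∀ x, g' (s x) = x := fun x => by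
    have := congrArg (fun φ => φ x) (congrArg DFunLike.coe hs); simpa using this
  have hcod : ∀ e : (V × P) ⧸ W, ((LinearMap.id : ((V × P) ⧸ W) →ₗ[Λ] ((V × P) ⧸ W)) -
      s.comp g') e ∈ LinearMap.range f := by
    intro e
    rw [hrange, LinearMap.mem_ker]
    simp [hsap]
  let rE : ((V × P) ⧸ W) →ₗ[Λ] V := (LinearEquiv.ofInjective f hf).symm.toLinearMap.comp
      (LinearMap.codRestrict (LinearMap.range f)
        ((LinearMap.id : ((V × P) ⧸ W) →ₗ[Λ] ((V × P) ⧸ W)) - s.comp g') hcod)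
  have hrf : ∀ v, rE (f v) = v := by
    intro v
    apply hf
    show f ((LinearEquiv.ofInjective f hf).symm
      (⟨((LinearMap.id : ((V × P) ⧸ W) →ₗ[Λ] ((V × P) ⧸ W)) - s.comp g') (f v),
        hcod (f v)⟩ : LinearMap.range f)) = f v
    rw [LinearEquiv.ofInjective_symm_apply]
    have hgv : g' (f v) = 0 := by
      rw [← LinearMap.mem_ker, ← hrange]; exact LinearMap.mem_range_self f v
    simp [hgv]
  refine ⟨-(rE.comp (W.mkQ.comp (LinearMap.inr Λ V P))), fun ω => ?_⟩
  have hmk : W.mkQ (0, ↑ω) = f (-(h ω)) := by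
    show W.mkQ (0, ↑ω) = W.mkQ (-(h ω), 0)
    rw [Submodule.mkQ_apply, Submodule.mkQ_apply, Submodule.Quotient.eq]
    exact ⟨ω, by simp⟩
  show -(rE (W.mkQ ((LinearMap.inr Λ V P) ↑ω))) = h ω
  rw [LinearMap.inr_apply, hmk, hrf]
  simp

theorem extProp_retract {P X V V' : Type} [AddCommGroup P] [Module Λ P] [AddCommGroup X]
    [Module Λ X] [AddCommGroup V] [Module Λ V] [AddCommGroup V'] [Module Λ V']
    {ρ : P →ₗ[Λ] X} (hp : ExtProp Λ ρ V) (ι : V' →ₗ[Λ] V) (r : V →ₗ[Λ] V')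
    (hri : ∀ x, r (ι x) = x) : ExtProp Λ ρ V' := by
  intro h
  obtain ⟨g, hg⟩ := hp (ι.comp h)
  exact ⟨r.comp g, fun ω => by simp [hg ω, hri]⟩

theorem extProp_pi {P X : Type} [AddCommGroup P] [Module Λ P] [AddCommGroup X]
    [Module Λ X] {ρ : P →ₗ[Λ] X} {κ : Type} (V : κ → Type) [∀ a, AddCommGroup (V a)]
    [∀ a, Module Λ (V a)] (hp : ∀ a, ExtProp Λ ρ (V a)) : ExtProp Λ ρ (∀ a, V a) := by
  intro h
  choose g hg using fun a => hp a ((LinearMap.proj a).comp h)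
  refine ⟨LinearMap.pi g, fun ω => ?_⟩
  funext a
  have := hg a ω
  simpa using this

theorem split_of_extProp {P X V E : Type} [AddCommGroup P] [Module Λ P] [Module.Projective Λ P]
    [AddCommGroup X] [Module Λ X] [AddCommGroup V] [Module Λ V] [AddCommGroup E] [Module Λ E]
    (ρ : P →ₗ[Λ] X) (hρ : Function.Surjective ρ) (hp : ExtProp Λ ρ V)
    (f : V →ₗ[Λ] E) (g : E →ₗ[Λ] X) (hf : Function.Injective f) (hg : Function.Surjective g)
    (hrange : LinearMap.range f = LinearMap.ker g) :
    ∃ s : X →ₗ[Λ] E, ∀ x, g (s x) = x := by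
  obtain ⟨lam, hlam⟩ := Module.projective_lifting_property g ρ hg
  have hlamap : ∀ p, g (lam p) = ρ p := fun p => by
    have := congrArg (fun φ => φ p) (congrArg DFunLike.coe hlam); simpa using this
  have hmem : ∀ ω : ↥(LinearMap.ker ρ), lam ↑ω ∈ LinearMap.range f := by
    intro ω
    rw [hrange, LinearMap.mem_ker, hlamap]
    exact ω.2
  let h : ↥(LinearMap.ker ρ) →ₗ[Λ] V := (LinearEquiv.ofInjective f hf).symm.toLinearMap.comp
    (LinearMap.codRestrict _ (lam.comp (LinearMap.ker ρ).subtype) hmem)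
  have hfh : ∀ ω, f (h ω) = lam ↑ω := by
    intro ω
    show f ((LinearEquiv.ofInjective f hf).symm ⟨lam ↑ω, hmem ω⟩) = lam ↑ω
    rw [LinearEquiv.ofInjective_symm_apply]
  obtain ⟨g₀, hg₀⟩ := hp h
  have hker : LinearMap.ker ρ ≤ LinearMap.ker (lam - f.comp g₀) := by
    intro p hp'
    rw [LinearMap.mem_ker, LinearMap.sub_apply, LinearMap.comp_apply, sub_eq_zero]
    rw [hg₀ ⟨p, hp'⟩, hfh ⟨p, hp'⟩]
  obtain ⟨s, hs⟩ := factor_through ρ hρ (lam - f.comp g₀) hker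
  refine ⟨s, fun x => ?_⟩
  obtain ⟨p, rfl⟩ := hρ x
  rw [hs]
  have hgf : g (f (g₀ p)) = 0 := by
    rw [← LinearMap.mem_ker, ← hrange]; exact LinearMap.mem_range_self f _
  simp [hlamap, hgf]



theorem bijective_or_nilpotent {X : Type} [AddCommGroup X] [Module Λ X]
    (hfl : IsFiniteLength Λ X) (hind : Indec Λ X) (θ : X →ₗ[Λ] X) :
    Function.Bijective θ ∨ ∃ m : ℕ, θ ^ m = 0 := by
  obtain ⟨hnoe, hart⟩ := isFiniteLength_iff_isNoetherian_isArtinian.mp hfl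
  obtain ⟨n, hn⟩ := Filter.eventually_atTop.mp θ.eventually_isCompl_ker_pow_range_pow
  have hc := hn (n + 1) (Nat.le_succ n)
  rcases hind.2 ↥(LinearMap.ker (θ ^ (n + 1))) ↥(LinearMap.range (θ ^ (n + 1)))
      ⟨(Submodule.prodEquivOfIsCompl _ _ hc).symm⟩ with hk | hr
  · left
    haveI := hk
    have hker : LinearMap.ker (θ ^ (n + 1)) = ⊥ := Submodule.eq_bot_of_subsingleton
    have hinj : Function.Injective θ := by
      have h1 : Function.Injective ⇑(θ ^ (n + 1)) := LinearMap.ker_eq_bot.1 hker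
      intro a b hab
      apply h1
      rw [pow_succ]
      simp [Module.End.mul_apply, hab]
    exact IsArtinian.bijective_of_injective_endomorphism θ hinj
  · right
    haveI := hr
    exact ⟨n + 1, LinearMap.range_eq_bot.1 Submodule.eq_bot_of_subsingleton⟩

/-- The core splitting lemma: if `v : V → X` is a non-surjective map into a finite length
indecomposable `X` with `Ext¹(X, V) = 0` over a hereditary ring, then the corestriction of
`v` onto its image splits. -/
theorem core_split {X V : Type} [AddCommGroup X] [Module Λ X] [AddCommGroup V] [Module Λ V]
    (hher : IsHereditaryRing Λ) (hflX : IsFiniteLength Λ X) (hindX : Indec Λ X)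
    {n : ℕ} (ρ : (Fin n → Λ) →ₗ[Λ] X) (hρ : Function.Surjective ρ)
    (hp : ExtProp Λ ρ V) (v : V →ₗ[Λ] X) (hns : ¬ Function.Surjective v) :
    ∃ s : ↥(LinearMap.range v) →ₗ[Λ] V, ∀ y : ↥(LinearMap.range v), v (s y) = ↑y := by
  classical
  obtain ⟨hnoe, hart⟩ := isFiniteLength_iff_isNoetherian_isArtinian.mp hflX
  set PI : Submodule Λ (Fin n → Λ) := Submodule.comap ρ (LinearMap.range v) with hPI
  haveI hprojPI : Module.Projective Λ ↥PI := hher _ inferInstance PI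
  let ρI : ↥PI →ₗ[Λ] ↥(LinearMap.range v) :=
    LinearMap.codRestrict _ (ρ.comp PI.subtype) (fun x => x.2)
  have hρI : Function.Surjective ρI := by
    rintro ⟨y, hy⟩
    obtain ⟨p, hpeq⟩ := hρ y
    exact ⟨⟨p, by simp [hPI, hpeq, hy]⟩, Subtype.ext hpeq⟩
  let vbar : V →ₗ[Λ] ↥(LinearMap.range v) :=
    LinearMap.codRestrict _ v (fun w => LinearMap.mem_range_self v w)
  have hvbar : Function.Surjective vbar := by
    rintro ⟨y, w, hw⟩
    exact ⟨w, Subtype.ext hw⟩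
  obtain ⟨lam, hlam⟩ := Module.projective_lifting_property vbar ρI hvbar
  have hlamap : ∀ x : ↥PI, v (lam x) = ρ ↑x := by
    intro x
    have h1 : vbar (lam x) = ρI x := by
      have := congrArg (fun φ => φ x) (congrArg DFunLike.coe hlam); simpa using this
    exact congrArg Subtype.val h1
  have hΩPI : LinearMap.ker ρ ≤ PI := by
    intro p hpk
    simp [hPI, Submodule.mem_comap, LinearMap.mem_ker.1 hpk]
  let j : ↥(LinearMap.ker ρ) →ₗ[Λ] ↥PI := Submodule.inclusion hΩPI
  obtain ⟨μ, hμ⟩ := hp (lam.comp j)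
  have hνker : LinearMap.ker ρ ≤ LinearMap.ker (v.comp μ) := by
    intro p hpk
    rw [LinearMap.mem_ker, LinearMap.comp_apply]
    rw [hμ ⟨p, hpk⟩]
    show v (lam (j ⟨p, hpk⟩)) = 0
    rw [hlamap]
    exact hpk
  obtain ⟨θ, hθ⟩ := factor_through ρ hρ (v.comp μ) hνker
  rcases bijective_or_nilpotent hflX hindX θ with hbij | ⟨m, hm⟩
  · exfalso
    apply hns
    intro x
    obtain ⟨y, hy⟩ := hbij.2 x
    obtain ⟨p, hpeq⟩ := hρ y
    exact ⟨μ p, by rw [← hy, ← hpeq, hθ p]; rfl⟩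
  · -- θ nilpotent, so 1 - θ is bijective
    have hτu : IsUnit ((1 : Module.End Λ X) - θ) := IsNilpotent.isUnit_one_sub ⟨m, hm⟩
    have hτbij : Function.Bijective ((1 : Module.End Λ X) - θ) :=
      (Module.End.isUnit_iff _).mp hτu
    -- α on PI
    set α : ↥PI →ₗ[Λ] V := μ.comp PI.subtype - lam with hα
    have hαker : LinearMap.ker ρI ≤ LinearMap.ker α := by
      rintro x hx
      have hxk : (↑x : Fin n → Λ) ∈ LinearMap.ker ρ := by
        have := LinearMap.mem_ker.1 hx
        have h2 := congrArg Subtype.val this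
        exact h2
      have hxj : x = j ⟨↑x, hxk⟩ := Subtype.ext rfl
      rw [LinearMap.mem_ker, hα, LinearMap.sub_apply, LinearMap.comp_apply, sub_eq_zero]
      rw [show (PI.subtype x : Fin n → Λ) = ↑(⟨↑x, hxk⟩ : ↥(LinearMap.ker ρ)) from rfl]
      rw [hμ ⟨↑x, hxk⟩]
      exact congrArg (⇑lam) (Subtype.ext rfl : j ⟨↑x, hxk⟩ = x)
    obtain ⟨δ, hδ⟩ := factor_through ρI hρI α hαker
    have hkey : ∀ z : ↥(LinearMap.range v), v (δ z) = θ ↑z - ↑z := by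
      intro z
      obtain ⟨x, rfl⟩ := hρI z
      rw [hδ x]
      have h1 : v (μ ↑x) = θ (ρ ↑x) := by
        have := (hθ ↑x).symm
        simpa using this
      have h2 : (↑(ρI x) : X) = ρ ↑x := rfl
      rw [hα]
      simp only [LinearMap.sub_apply, LinearMap.comp_apply, Submodule.subtype_apply, map_sub]
      rw [h1, hlamap, h2]
    have hτmem : ∀ z : ↥(LinearMap.range v),
        ((1 : Module.End Λ X) - θ) ↑z ∈ LinearMap.range v := by
      intro z
      have : ((1 : Module.End Λ X) - θ) ↑z = v (-(δ z)) := by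
        rw [map_neg, hkey z]
        simp [LinearMap.sub_apply]
      rw [this]
      exact LinearMap.mem_range_self v _
    let τ' : ↥(LinearMap.range v) →ₗ[Λ] ↥(LinearMap.range v) :=
      LinearMap.codRestrict _ (((1 : Module.End Λ X) - θ).comp (LinearMap.range v).subtype)
        (fun z => hτmem z)
    have hτ'val : ∀ z, (↑(τ' z) : X) = ↑z - θ ↑z := by
      intro z
      show ((1 : Module.End Λ X) - θ) ↑z = ↑z - θ ↑z
      simp [LinearMap.sub_apply]
    have hτ'inj : Function.Injective τ' := by
      intro z₁ z₂ hz
      apply Subtype.ext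
      apply hτbij.1
      have := congrArg Subtype.val hz
      rw [hτ'val, hτ'val] at this
      simpa [LinearMap.sub_apply] using this
    haveI : IsArtinian Λ ↥(LinearMap.range v) := inferInstance
    have hτ'bij : Function.Bijective τ' :=
      IsArtinian.bijective_of_injective_endomorphism τ' hτ'inj
    let ψ := (LinearEquiv.ofBijective τ' hτ'bij).symm
    refine ⟨-(δ.comp ψ.toLinearMap), fun y => ?_⟩
    have h3 : v (δ (ψ y)) = θ ↑(ψ y) - ↑(ψ y) := hkey (ψ y)
    have h4 : τ' (ψ y) = y := (LinearEquiv.ofBijective τ' hτ'bij).apply_symm_apply y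
    have h5 : (↑y : X) = ↑(ψ y) - θ ↑(ψ y) :=
      (congrArg Subtype.val h4).symm.trans (hτ'val (ψ y))
    show v (-(δ (ψ y))) = ↑y
    rw [map_neg, h3, neg_sub]
    exact h5.symm

/-- A linear equivalence `(∀ j, Nf j) ≃ (∀ j ≠ i, Nf j) × Nf i`. -/
noncomputable def piSplitEquiv {t : ℕ} (Nf : Fin t → Type) [∀ i, AddCommGroup (Nf i)]
    [∀ i, Module Λ (Nf i)] (i : Fin t) :
    (∀ j, Nf j) ≃ₗ[Λ] (∀ j : {j : Fin t // j ≠ i}, Nf ↑j) × Nf i := by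
  classical
  let F : (∀ j, Nf j) →ₗ[Λ] (∀ j : {j : Fin t // j ≠ i}, Nf ↑j) × Nf i :=
    LinearMap.prod (LinearMap.pi fun j : {j : Fin t // j ≠ i} => LinearMap.proj (j : Fin t))
      (LinearMap.proj i)
  let G : ((∀ j : {j : Fin t // j ≠ i}, Nf ↑j) × Nf i) →ₗ[Λ] (∀ j, Nf j) :=
    (LinearMap.pi fun j : Fin t =>
        if h : j = i then (0 : (∀ j' : {j : Fin t // j ≠ i}, Nf ↑j') →ₗ[Λ] Nf j)
        else LinearMap.proj (⟨j, h⟩ : {j : Fin t // j ≠ i})).comp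
        (LinearMap.fst Λ _ _) +
      (LinearMap.single Λ Nf i).comp (LinearMap.snd Λ _ _)
  have hG : ∀ (y : ∀ j : {j : Fin t // j ≠ i}, Nf ↑j) (z : Nf i) (j : Fin t),
      G (y, z) j = (if h : j = i then (0 : (∀ j' : {j : Fin t // j ≠ i}, Nf ↑j') →ₗ[Λ] Nf j)
        else LinearMap.proj (⟨j, h⟩ : {j : Fin t // j ≠ i})) y + Pi.single i z j := by
    intro y z j
    simp [G, LinearMap.pi_apply, LinearMap.single_apply]
  refine LinearEquiv.mk F ⇑G ?_ ?_
  · intro x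
    show G (F x) = x
    funext j
    rw [hG]
    by_cases h : j = i
    · subst h
      rw [dif_pos rfl]
      simp [F]
    · rw [dif_neg h]
      simp [F, Pi.single_eq_of_ne h]
  · rintro ⟨y, z⟩
    show F (G (y, z)) = (y, z)
    refine Prod.ext ?_ ?_
    · funext j'
      show G (y, z) ↑j' = y j'
      rw [hG]
      rw [dif_neg j'.2]
      simp only [LinearMap.proj_apply, Pi.single_eq_of_ne j'.2, add_zero]
    · show G (y, z) i = z
      rw [hG, dif_pos rfl]
      simp

theorem not_surj_approx {t : ℕ} (Nf : Fin t → Type) [∀ i, AddCommGroup (Nf i)]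
    [∀ i, Module Λ (Nf i)] (hind : ∀ i, Indec Λ (Nf i)) (hnorm : IsNormal Λ (∀ i, Nf i))
    {i : Fin t} {Ui : Type} [AddCommGroup Ui] [Module Λ Ui] (u : Ui →ₗ[Λ] Nf i)
    (hU : InAddFam Λ t Nf {j | j ≠ i} Ui) : ¬ Function.Surjective u := by
  classical
  intro hsurj
  obtain ⟨m, c, hc, ι, p, hpι⟩ := hU
  have hpsurj : Function.Surjective p := by
    intro x
    refine ⟨ι x, ?_⟩
    have := congrArg (fun φ => φ x) (congrArg DFunLike.coe hpι)
    simpa using this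
  let Φ : (Fin m → (∀ j : {j : Fin t // j ≠ i}, Nf ↑j)) →ₗ[Λ] (∀ a, Nf (c a)) :=
    LinearMap.pi fun a =>
      ((LinearMap.proj (R := Λ) (φ := fun j : {j : Fin t // j ≠ i} => Nf ↑j)
        ⟨c a, hc a⟩).comp
      (LinearMap.proj (R := Λ)
        (φ := fun _ : Fin m => ∀ j : {j : Fin t // j ≠ i}, Nf ↑j) a))
  have hΦ : Function.Surjective Φ := by
    intro x
    refine ⟨fun a => LinearMap.single Λ (fun j : {j : Fin t // j ≠ i} => Nf ↑j)
      ⟨c a, hc a⟩ (x a), ?_⟩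
    funext a
    simp [Φ]
  have hgen : Generates Λ (∀ j : {j : Fin t // j ≠ i}, Nf ↑j) (Nf i) :=
    ⟨m, u.comp (p.comp Φ), by
      have : Function.Surjective (u.comp (p.comp Φ)) := by
        intro x
        obtain ⟨w, hw⟩ := hsurj x
        obtain ⟨z, hz⟩ := hpsurj w
        obtain ⟨f, hf⟩ := hΦ z
        exact ⟨f, by simp [hf, hz, hw]⟩
      exact this⟩
  have := hnorm _ _ ⟨piSplitEquiv Nf i⟩ hgen
  exact (hind i).1 this

/-- Splitting of a module along an idempotent endomorphism. -/
noncomputable def idemSplit {X : Type} [AddCommGroup X] [Module Λ X] (e : X →ₗ[Λ] X)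
    (he : ∀ x, e (e x) = e x) :
    X ≃ₗ[Λ] ↥(LinearMap.ker e) × ↥(LinearMap.range e) := by
  refine LinearEquiv.mk
    (LinearMap.prod
      (LinearMap.codRestrict _ (LinearMap.id - e) (fun x => by
        rw [LinearMap.mem_ker]; simp [he]))
      (LinearMap.codRestrict _ e (fun x => LinearMap.mem_range_self e x)))
    (fun ab => ↑ab.1 + ↑ab.2) ?_ ?_
  · intro x
    show ((x - e x) + e x : X) = x
    abel
  · rintro ⟨a, b⟩
    have ha : e ↑a = 0 := a.2
    obtain ⟨y, hy⟩ := b.2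
    have hb : e ↑b = ↑b := by rw [← hy, he]
    refine Prod.ext (Subtype.ext ?_) (Subtype.ext ?_)
    · show (↑a + ↑b : X) - e (↑a + ↑b) = ↑a
      rw [map_add, ha, hb]
      abel
    · show e (↑a + ↑b : X) = ↑b
      rw [map_add, ha, hb, zero_add]


theorem brick_of_rigid {X : Type} [AddCommGroup X] [Module Λ X]
    (hher : IsHereditaryRing Λ) (hfl : IsFiniteLength Λ X) (hind : Indec Λ X)
    {n : ℕ} (ρ : (Fin n → Λ) →ₗ[Λ] X) (hρ : Function.Surjective ρ)
    (hp : ExtProp Λ ρ X) :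
    ∀ θ : X →ₗ[Λ] X, θ ≠ 0 → Function.Bijective θ := by
  obtain ⟨hnoe, hart⟩ := isFiniteLength_iff_isNoetherian_isArtinian.mp hfl
  intro θ hθ0
  by_contra hnb
  have hnsurj : ¬ Function.Surjective θ := fun hs =>
    hnb ⟨IsNoetherian.injective_of_surjective_endomorphism θ hs, hs⟩
  have hninj : ¬ Function.Injective θ := fun hi =>
    hnb (IsArtinian.bijective_of_injective_endomorphism θ hi)
  obtain ⟨s, hs⟩ := core_split hher hfl hind ρ hρ hp θ hnsurj
  let e : X →ₗ[Λ] X := s.comp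
    (LinearMap.codRestrict _ θ (fun x => LinearMap.mem_range_self θ x))
  have he1 : ∀ x, θ (e x) = θ x := fun x => hs ⟨θ x, LinearMap.mem_range_self θ x⟩
  have he : ∀ x, e (e x) = e x := by
    intro x
    show s ⟨θ (e x), _⟩ = e x
    rw [show (⟨θ (e x), LinearMap.mem_range_self θ (e x)⟩ : ↥(LinearMap.range θ)) =
      ⟨θ x, LinearMap.mem_range_self θ x⟩ from Subtype.ext (he1 x)]
    rfl
  rcases hind.2 ↥(LinearMap.ker e) ↥(LinearMap.range e) ⟨idemSplit e he⟩ with hk | hr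
  · obtain ⟨a, b, hab, hne⟩ := Function.not_injective_iff.mp hninj
    have hz : θ (a - b) = 0 := by rw [map_sub, hab, sub_self]
    have hze : e (a - b) = 0 := by
      show s ⟨θ (a - b), _⟩ = 0
      rw [show (⟨θ (a - b), LinearMap.mem_range_self θ (a - b)⟩ : ↥(LinearMap.range θ)) = 0 from
        Subtype.ext hz, map_zero]
    have : (⟨a - b, LinearMap.mem_ker.2 hze⟩ : ↥(LinearMap.ker e)) =
        (⟨0, (LinearMap.ker e).zero_mem⟩ : ↥(LinearMap.ker e)) := hk.elim _ _
    have h0 : a - b = 0 := congrArg Subtype.val this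
    exact hne (sub_eq_zero.mp h0)
  · obtain ⟨x, hx⟩ : ∃ x, θ x ≠ 0 := by
      by_contra hc
      push_neg at hc
      exact hθ0 (LinearMap.ext hc)
    have : (⟨e x, LinearMap.mem_range_self e x⟩ : ↥(LinearMap.range e)) =
        (⟨0, (LinearMap.range e).zero_mem⟩ : ↥(LinearMap.range e)) := hr.elim _ _
    have hex : e x = 0 := congrArg Subtype.val this
    apply hx
    rw [← he1 x, hex, map_zero]


end Stmt3Helpers

/-- For a normal module `N = ⊕ Nᵢ` without self-extensions, each minimal right
approximation `uᵢ : Uᵢ → Nᵢ` is injective, not surjective, and its cokernel `Δ(i)` is a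
nonzero brick. -/
theorem stmt3 (k : Type) [CommRing k] [IsArtinianRing k]
    (Λ : Type) [Ring Λ] [Algebra k Λ] (hart : IsFiniteLength k Λ)
    (hher : IsHereditaryRing Λ)
    (t : ℕ) (Nf : Fin t → Type) [∀ i, AddCommGroup (Nf i)] [∀ i, Module Λ (Nf i)]
    (hfl : ∀ i, IsFiniteLength Λ (Nf i)) (hind : ∀ i, Indec Λ (Nf i))
    (hnorm : IsNormal Λ (∀ i, Nf i)) (hself : ExtVanish Λ (∀ i, Nf i) (∀ i, Nf i))
    (U : Fin t → Type) [∀ i, AddCommGroup (U i)] [∀ i, Module Λ (U i)]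
    (u : ∀ i, U i →ₗ[Λ] Nf i)
    (hUadd : ∀ i, InAddFam Λ t Nf {j | j ≠ i} (U i))
    (happrox : ∀ i, ∀ (X : Type) [AddCommGroup X] [Module Λ X],
      InAddFam Λ t Nf {j | j ≠ i} X →
      ∀ f : X →ₗ[Λ] Nf i, ∃ h : X →ₗ[Λ] U i, (u i).comp h = f)
    (hmin : ∀ i, ∀ h : U i →ₗ[Λ] U i, (u i).comp h = u i → Function.Bijective h) :
    ∀ i, Function.Injective (u i) ∧ ¬ Function.Surjective (u i) ∧
      ¬ Subsingleton (Nf i ⧸ LinearMap.range (u i)) ∧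
      IsBrick Λ (Nf i ⧸ LinearMap.range (u i)) := by
    classical
  intro i
  obtain ⟨hnoeNi, hartNi⟩ := isFiniteLength_iff_isNoetherian_isArtinian.mp (hfl i)
  haveI := hnoeNi
  haveI := hartNi
  -- Step 1 : u i is not surjective (normality)
  have hnsurj : ¬ Function.Surjective (u i) := not_surj_approx Nf hind hnorm (u i) (hUadd i)
  -- free presentation of Nf i
  haveI : Module.Finite Λ (Nf i) := ⟨IsNoetherian.noetherian ⊤⟩
  obtain ⟨n, ρ, hρ⟩ := Module.Finite.exists_fin' Λ (Nf i)
  -- Ext-vanishing data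
  have hevN : ExtVanish Λ (Nf i) (∀ j, Nf j) :=
    extVanish_retract_left hself (LinearMap.single Λ Nf i) (LinearMap.proj i)
      (fun x => by simp)
  have hextN : ExtProp Λ ρ (∀ j, Nf j) := extProp_of_extVanish ρ hρ hevN
  obtain ⟨m, c, hc, ιU, pU, hpι⟩ := hUadd i
  have hext_pic : ExtProp Λ ρ (∀ a, Nf (c a)) := by
    have h1 : ExtProp Λ ρ (Fin m → ∀ j, Nf j) := extProp_pi _ (fun _ => hextN)
    exact extProp_retract h1
      (LinearMap.pi fun a : Fin m => (LinearMap.single Λ Nf (c a)).comp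
        (LinearMap.proj (R := Λ) (φ := fun b : Fin m => Nf (c b)) a))
      (LinearMap.pi fun a : Fin m =>
        (LinearMap.proj (R := Λ) (φ := fun j => Nf j) (c a)).comp
        (LinearMap.proj (R := Λ) (φ := fun _ : Fin m => ∀ j, Nf j) a))
      (fun x => by
        funext a
        simp)
  have hextU : ExtProp Λ ρ (U i) := extProp_retract hext_pic ιU pU
    (fun x => by
      have := congrArg (fun φ => φ x) (congrArg DFunLike.coe hpι)
      simpa using this)
  have hextNi : ExtProp Λ ρ (Nf i) := extProp_retract hextN
    (LinearMap.single Λ Nf i) (LinearMap.proj i) (fun x => by simp)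
  -- injectivity of u i
  have hinj : Function.Injective (u i) := by
    obtain ⟨s, hs⟩ := core_split hher (hfl i) (hind i) ρ hρ hextU (u i) hnsurj
    let e : U i →ₗ[Λ] U i := s.comp
      (LinearMap.codRestrict _ (u i) (fun x => LinearMap.mem_range_self (u i) x))
    have hue : (u i).comp e = u i :=
      LinearMap.ext fun x => hs ⟨u i x, LinearMap.mem_range_self _ x⟩
    have hbij := hmin i e hue
    rw [injective_iff_map_eq_zero]
    intro a ha
    have h1 : e a = 0 := by
      show s ⟨u i a, _⟩ = 0
      rw [show (⟨u i a, LinearMap.mem_range_self (u i) a⟩ : ↥(LinearMap.range (u i))) = 0 from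
        Subtype.ext ha, map_zero]
    have h2 : e a = e 0 := by rw [h1, map_zero]
    exact hbij.1 h2
  -- nonzero cokernel
  have hne : LinearMap.range (u i) ≠ ⊤ := fun h => hnsurj (LinearMap.range_eq_top.1 h)
  have hnsub : ¬ Subsingleton (Nf i ⧸ LinearMap.range (u i)) := fun h =>
    hne (Submodule.Quotient.subsingleton_iff.1 h)
  -- Nf i is a brick (Happel–Ringel)
  have hbrickNi : ∀ θ : Nf i →ₗ[Λ] Nf i, θ ≠ 0 → Function.Bijective θ :=
    brick_of_rigid hher (hfl i) (hind i) ρ hρ hextNi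
  refine ⟨hinj, hnsurj, hnsub, ?_, ?_⟩
  · -- 0 ≠ 1 in End(Δ)
    intro h01
    apply hnsub
    refine ⟨fun x y => ?_⟩
    have hx : x = (1 : Module.End Λ (Nf i ⧸ LinearMap.range (u i))) x := rfl
    have hy : y = (1 : Module.End Λ (Nf i ⧸ LinearMap.range (u i))) y := rfl
    rw [hx, hy, ← h01]
    rfl
  · -- every nonzero endomorphism of Δ is invertible
    intro φ hφ0
    set pm := (LinearMap.range (u i)).mkQ with hpm
    have hpmsurj : Function.Surjective pm := Submodule.mkQ_surjective _
    let q : (Nf i × Nf i) →ₗ[Λ] (Nf i ⧸ LinearMap.range (u i)) :=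
      (pm.comp (LinearMap.fst Λ _ _)) - ((φ.comp pm).comp (LinearMap.snd Λ _ _))
    have hqmem : ∀ z : Nf i × Nf i, z ∈ LinearMap.ker q ↔ pm z.1 = φ (pm z.2) := by
      intro z
      rw [LinearMap.mem_ker]
      simp [q, sub_eq_zero]
    have hpmu : ∀ x : U i, pm (u i x) = 0 := fun x =>
      (Submodule.Quotient.mk_eq_zero _).2 (LinearMap.mem_range_self (u i) x)
    let f : U i →ₗ[Λ] ↥(LinearMap.ker q) := LinearMap.codRestrict _
      ((LinearMap.inl Λ _ _).comp (u i)) (fun x => (hqmem _).2 (by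
        show pm (u i x) = φ (pm 0)
        rw [hpmu, map_zero, map_zero]))
    let g : ↥(LinearMap.ker q) →ₗ[Λ] Nf i :=
      (LinearMap.snd Λ _ _).comp (LinearMap.ker q).subtype
    have hfinj : Function.Injective f := by
      rw [injective_iff_map_eq_zero]
      intro x hx
      have h1 : ((u i x, 0) : Nf i × Nf i) = 0 := congrArg Subtype.val hx
      exact (injective_iff_map_eq_zero (u i)).1 hinj x (by simpa using congrArg Prod.fst h1)
    have hgsurj : Function.Surjective g := by
      intro b
      obtain ⟨a, ha⟩ := hpmsurj (φ (pm b))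
      exact ⟨⟨(a, b), (hqmem _).2 ha⟩, rfl⟩
    have hrange : LinearMap.range f = LinearMap.ker g := by
      apply le_antisymm
      · rintro _ ⟨x, rfl⟩
        rw [LinearMap.mem_ker]
        rfl
      · rintro ⟨⟨a, b⟩, hz⟩ hzg
        have hb : b = 0 := hzg
        have h1 : pm a = 0 := by
          have := (hqmem _).1 hz
          simpa [hb] using this
        obtain ⟨x, hx⟩ := (Submodule.Quotient.mk_eq_zero _).1 h1
        exact ⟨x, Subtype.ext (Prod.ext hx (by exact hb.symm))⟩
    obtain ⟨sψ, hsψ⟩ := split_of_extProp ρ hρ hextU f g hfinj hgsurj hrange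
    let ψ : Nf i →ₗ[Λ] Nf i :=
      ((LinearMap.fst Λ _ _).comp (LinearMap.ker q).subtype).comp sψ
    have hcomm : ∀ b, pm (ψ b) = φ (pm b) := by
      intro b
      have h1 := (hqmem _).1 (sψ b).2
      have h2 : ((sψ b : Nf i × Nf i)).2 = b := hsψ b
      rw [h2] at h1
      exact h1
    obtain ⟨xb, hxb⟩ : ∃ x, φ x ≠ 0 := by
      by_contra hcon
      push_neg at hcon
      exact hφ0 (LinearMap.ext hcon)
    obtain ⟨b, hb⟩ := hpmsurj xb
    have hψ0 : ψ ≠ 0 := by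
      intro hz
      apply hxb
      rw [← hb, ← hcomm, hz]
      rfl
    have hψbij := hbrickNi ψ hψ0
    have hφsurj : Function.Surjective φ := by
      intro z
      obtain ⟨a, ha⟩ := hpmsurj z
      obtain ⟨b', hb'⟩ := hψbij.2 a
      exact ⟨pm b', by rw [← hcomm, hb', ha]⟩
    haveI : IsNoetherian Λ (Nf i ⧸ LinearMap.range (u i)) := inferInstance
    have hφinj : Function.Injective φ :=
      IsNoetherian.injective_of_surjective_endomorphism φ hφsurj
    exact (Module.End.isUnit_iff φ).mpr ⟨hφinj, hφsurj⟩
end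

section
/- Let Λ be a hereditary artin algebra and N = ⊕ᵢ Nᵢ a normal module without self-extensions, with Nᵢ indecomposable, and let Δ(i) be the cokernel of a minimal right add({N_j : j ≠ i})-approximation Uᵢ → Nᵢ. Then for i ≠ j every homomorphism Δ(j) → Δ(i) is zero; hence {Δ(i)} is an antichain in mod Λ. -/
open CategoryTheory

section MyAux
open Function

variable {Λ : Type} [Ring Λ]

/-- From a retraction, a direct-product decomposition. -/
lemma auxEquivProdOfSplit {M N : Type} [AddCommGroup M] [Module Λ M] [AddCommGroup N]
    [Module Λ N] (r : M →ₗ[Λ] N) (s : N →ₗ[Λ] M) (h : r.comp s = LinearMap.id) :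
    Nonempty (M ≃ₗ[Λ] N × ↥(LinearMap.ker r)) := by
  have hrs : ∀ x, r (s x) = x := fun x => congrArg (fun f => f x) (congrArg DFunLike.coe h)
  have hmem : ∀ c, ((LinearMap.id : M →ₗ[Λ] M) - s.comp r) c ∈ LinearMap.ker r := by
    intro c; simp [LinearMap.mem_ker, hrs]
  refine ⟨LinearEquiv.ofLinear
    (LinearMap.prod r (((LinearMap.id : M →ₗ[Λ] M) - s.comp r).codRestrict (LinearMap.ker r) hmem))
    (s.comp (LinearMap.fst Λ N ↥(LinearMap.ker r)) +
      (LinearMap.ker r).subtype.comp (LinearMap.snd Λ N ↥(LinearMap.ker r))) ?_ ?_⟩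
  · apply LinearMap.ext; rintro ⟨x, y⟩
    have hy : r (y : M) = 0 := y.2
    refine Prod.ext ?_ (Subtype.ext ?_)
    · simp [hrs, hy]
    · simp [hrs, hy]
  · apply LinearMap.ext; intro x
    simp

/-- Fitting dichotomy: every endomorphism of a finite length indecomposable module is
bijective or nilpotent. -/
lemma auxBijectiveOrNilpotent {M : Type} [AddCommGroup M] [Module Λ M]
    (hfl : IsFiniteLength Λ M)
    (hind : ¬ Subsingleton M ∧ ∀ (P Q : Type) [AddCommGroup P] [Module Λ P] [AddCommGroup Q]
      [Module Λ Q], Nonempty (M ≃ₗ[Λ] P × Q) → Subsingleton P ∨ Subsingleton Q)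
    (f : M →ₗ[Λ] M) : Function.Bijective f ∨ ∃ n, 1 ≤ n ∧ f ^ n = 0 := by
  haveI hN := (isFiniteLength_iff_isNoetherian_isArtinian.mp hfl).1
  haveI hA := (isFiniteLength_iff_isNoetherian_isArtinian.mp hfl).2
  obtain ⟨n, hn⟩ := Filter.eventually_atTop.mp f.eventually_isCompl_ker_pow_range_pow
  set m := max n 1 with hm
  have hcompl := hn m (le_max_left _ _)
  have hm1 : 1 ≤ m := le_max_right _ _
  rcases hind.2 ↥(LinearMap.ker (f ^ m)) ↥(LinearMap.range (f ^ m))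
      ⟨(Submodule.prodEquivOfIsCompl _ _ hcompl).symm⟩ with hk | hr
  · left
    have hker : LinearMap.ker (f ^ m) = ⊥ := by
      rw [eq_bot_iff]; intro x hx
      have : (⟨x, hx⟩ : ↥(LinearMap.ker (f ^ m))) = 0 := Subsingleton.elim _ _
      simpa using congrArg Subtype.val this
    have hinj : Function.Injective f := by
      rw [← LinearMap.ker_eq_bot, eq_bot_iff]
      intro x hx
      have hx' : f x = 0 := hx
      obtain ⟨k, hk2⟩ := Nat.exists_eq_add_of_le hm1
      have hz : (f ^ m) x = 0 := by
        rw [hk2, add_comm, pow_succ]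
        simp [Module.End.mul_apply, hx']
      rw [← hker]
      exact hz
    exact IsArtinian.bijective_of_injective_endomorphism f hinj
  · right
    refine ⟨m, hm1, ?_⟩
    apply LinearMap.ext; intro x
    have : (⟨(f ^ m) x, LinearMap.mem_range_self _ x⟩ : ↥(LinearMap.range (f ^ m))) = 0 :=
      Subsingleton.elim _ _
    simpa using congrArg Subtype.val this

/-- The extension-lifting property relative to a presentation. -/
def HEP (Λ : Type) [Ring Λ] {F : Type} [AddCommGroup F] [Module Λ F] (Ω : Submodule Λ F)
    (N : Type) [AddCommGroup N] [Module Λ N] : Prop :=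
  ∀ ψ : ↥Ω →ₗ[Λ] N, ∃ Ψ : F →ₗ[Λ] N, Ψ.comp Ω.subtype = ψ

lemma HEP.pi {F : Type} [AddCommGroup F] [Module Λ F] {Ω : Submodule Λ F} {m : ℕ}
    {X : Fin m → Type} [∀ a, AddCommGroup (X a)] [∀ a, Module Λ (X a)]
    (h : ∀ a, HEP Λ Ω (X a)) : HEP Λ Ω (∀ a, X a) := by
  intro ψ
  choose Ψ hΨ using fun a => h a ((LinearMap.proj a).comp ψ)
  refine ⟨LinearMap.pi Ψ, ?_⟩
  apply LinearMap.ext; intro w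
  funext a
  exact congrArg (fun f => f w) (congrArg DFunLike.coe (hΨ a))

lemma HEP.summand {F : Type} [AddCommGroup F] [Module Λ F] {Ω : Submodule Λ F}
    {N N' : Type} [AddCommGroup N] [Module Λ N] [AddCommGroup N'] [Module Λ N']
    (h : HEP Λ Ω N) (ι : N' →ₗ[Λ] N) (p : N →ₗ[Λ] N') (hpι : p.comp ι = LinearMap.id) :
    HEP Λ Ω N' := by
  intro ψ
  obtain ⟨Ψ, hΨ⟩ := h (ι.comp ψ)
  refine ⟨p.comp Ψ, ?_⟩
  apply LinearMap.ext; intro w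
  have h1 : Ψ (w : F) = ι (ψ w) := congrArg (fun f => f w) (congrArg DFunLike.coe hΨ)
  have h2 : ∀ x, p (ι x) = x := fun x => congrArg (fun f => f x) (congrArg DFunLike.coe hpι)
  simp [h1, h2]

lemma HEP.epi {F : Type} [AddCommGroup F] [Module Λ F] {Ω : Submodule Λ F}
    [Module.Projective Λ ↥Ω] {N K : Type} [AddCommGroup N] [Module Λ N] [AddCommGroup K]
    [Module Λ K] (h : HEP Λ Ω N) (q : N →ₗ[Λ] K) (hq : Function.Surjective q) :
    HEP Λ Ω K := by
  intro ψ
  obtain ⟨ψ', hψ'⟩ := Module.projective_lifting_property q ψ hq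
  obtain ⟨Ψ', hΨ'⟩ := h ψ'
  refine ⟨q.comp Ψ', ?_⟩
  rw [LinearMap.comp_assoc, hΨ', hψ']

/-- From `Ext¹(M,N)=0`, extension of maps along a presentation (via a pushout). -/
lemma auxExtVanishToHEP {M N F : Type} [AddCommGroup M] [Module Λ M] [AddCommGroup N]
    [Module Λ N] [AddCommGroup F] [Module Λ F] (pres : F →ₗ[Λ] M)
    (hpres : Function.Surjective pres) (hEV : ExtVanish Λ M N) :
    HEP Λ (LinearMap.ker pres) N := by
  intro ψ
  set d : ↥(LinearMap.ker pres) →ₗ[Λ] N × F :=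
    LinearMap.prod ψ (-((LinearMap.ker pres).subtype)) with hd
  set D := LinearMap.range d with hD
  set jN : N →ₗ[Λ] ((N × F) ⧸ D) := D.mkQ.comp (LinearMap.inl Λ N F) with hjN
  have hDker : D ≤ LinearMap.ker (pres.comp (LinearMap.snd Λ N F)) := by
    rintro _ ⟨w, rfl⟩
    have : (w : F) ∈ LinearMap.ker pres := w.2
    simp only [hd, LinearMap.mem_ker, LinearMap.coe_comp, Function.comp_apply, LinearMap.prod_apply,
      Function.prod, LinearMap.snd_apply, LinearMap.neg_apply, map_neg, Submodule.coe_subtype]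
    rw [LinearMap.mem_ker.mp this, neg_zero]
  set gE : ((N × F) ⧸ D) →ₗ[Λ] M := D.liftQ (pres.comp (LinearMap.snd Λ N F)) hDker with hgE
  have hgEmk : ∀ z : N × F, gE (D.mkQ z) = pres z.2 := fun z => rfl
  have hjNinj : Function.Injective jN := by
    rw [← LinearMap.ker_eq_bot, eq_bot_iff]
    intro x hx
    have hx0 : D.mkQ (x, 0) = 0 := hx
    rw [Submodule.mkQ_apply, Submodule.Quotient.mk_eq_zero] at hx0
    obtain ⟨w, hw⟩ := hx0
    have hw2 : -(w : F) = 0 := congrArg Prod.snd hw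
    have hw0 : w = 0 := by
      apply Subtype.ext; simpa using hw2
    have := congrArg Prod.fst hw
    simp only [hd, LinearMap.prod_apply, Function.prod] at this
    rw [hw0] at this
    simpa using this.symm
  have hgEsurj : Function.Surjective gE := by
    intro m'
    obtain ⟨y, hy⟩ := hpres m'
    exact ⟨D.mkQ (0, y), by rw [hgEmk]; exact hy⟩
  have hrange : LinearMap.range jN = LinearMap.ker gE := by
    apply le_antisymm
    · rintro _ ⟨x, rfl⟩
      simp only [LinearMap.mem_ker, hjN, LinearMap.coe_comp, Function.comp_apply, LinearMap.inl_apply]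
      rw [hgEmk]; exact map_zero pres
    · intro z hz
      obtain ⟨⟨x, y⟩, rfl⟩ := D.mkQ_surjective z
      have hy : y ∈ LinearMap.ker pres := by
        have := LinearMap.mem_ker.mp hz
        rw [hgEmk] at this
        exact LinearMap.mem_ker.mpr this
      refine ⟨x + ψ ⟨y, hy⟩, ?_⟩
      simp only [hjN, LinearMap.coe_comp, Function.comp_apply, LinearMap.inl_apply, Submodule.mkQ_apply]
      rw [Submodule.Quotient.eq]
      refine ⟨⟨y, hy⟩, ?_⟩
      simp [hd]
  obtain ⟨s, hs⟩ := hEV ((N × F) ⧸ D) jN gE hjNinj hgEsurj hrange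
  have hsid : ∀ x, gE (s x) = x := fun x => congrArg (fun f => f x) (congrArg DFunLike.coe hs)
  set θ : F →ₗ[Λ] ((N × F) ⧸ D) := D.mkQ.comp (LinearMap.inr Λ N F) - s.comp pres with hθ
  have hθmem : ∀ y, θ y ∈ LinearMap.range jN := by
    intro y
    rw [hrange, LinearMap.mem_ker]
    simp only [hθ, LinearMap.sub_apply, LinearMap.coe_comp, Function.comp_apply, LinearMap.inr_apply,
      map_sub, hsid]
    rw [hgEmk]
    simp
  set eN := LinearEquiv.ofInjective jN hjNinj with heN
  refine ⟨(eN.symm : ↥(LinearMap.range jN) →ₗ[Λ] N).comp (θ.codRestrict (LinearMap.range jN)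
    hθmem), ?_⟩
  apply LinearMap.ext; intro w
  have hkey : θ (w : F) = jN (ψ w) := by
    simp only [hθ, LinearMap.sub_apply, LinearMap.coe_comp, Function.comp_apply, LinearMap.inr_apply]
    have : pres (w : F) = 0 := w.2
    rw [this, map_zero, sub_zero, hjN]
    simp only [LinearMap.coe_comp, Function.comp_apply, LinearMap.inl_apply, Submodule.mkQ_apply]
    rw [Submodule.Quotient.eq]
    exact ⟨-w, by simp [hd]⟩
  apply hjNinj
  have : ∀ z : ↥(LinearMap.range jN), jN (eN.symm z) = (z : (N × F) ⧸ D) := by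
    intro z
    have := eN.apply_symm_apply z
    have h2 := congrArg Subtype.val this
    rwa [heN, LinearEquiv.ofInjective_apply] at h2
  simp only [LinearMap.coe_comp, Function.comp_apply, LinearEquiv.coe_coe]
  rw [this]
  simp only [LinearMap.codRestrict_apply]
  exact hkey

/-- A map killing the kernel of a surjection factors through it. -/
lemma auxFactorThrough {M F E : Type} [AddCommGroup M] [Module Λ M] [AddCommGroup F]
    [Module Λ F] [AddCommGroup E] [Module Λ E] (pres : F →ₗ[Λ] M)
    (hpres : Function.Surjective pres) (σ : F →ₗ[Λ] E) (hσ : LinearMap.ker pres ≤ LinearMap.ker σ) :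
    ∃ s : M →ₗ[Λ] E, s.comp pres = σ := by
  set eQ := pres.quotKerEquivOfSurjective hpres with heQ
  refine ⟨((LinearMap.ker pres).liftQ σ hσ).comp (eQ.symm : M →ₗ[Λ] (F ⧸ LinearMap.ker pres)), ?_⟩
  apply LinearMap.ext; intro x
  have hmk : eQ.symm (pres x) = Submodule.Quotient.mk x := by
    apply eQ.injective
    rw [eQ.apply_symm_apply]
    rfl
  simp only [LinearMap.coe_comp, Function.comp_apply, LinearEquiv.coe_coe]
  rw [hmk]
  rfl

/-- The `HEP` property implies `Ext¹(M, N) = 0`. -/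
lemma auxHEPToExtVanish {M N F : Type} [AddCommGroup M] [Module Λ M] [AddCommGroup N]
    [Module Λ N] [AddCommGroup F] [Module Λ F] [Module.Projective Λ F] (pres : F →ₗ[Λ] M)
    (hpres : Function.Surjective pres) (hHE : HEP Λ (LinearMap.ker pres) N) :
    ExtVanish Λ M N := by
  intro E _ _ f g hf hg hrange
  obtain ⟨φ, hφ⟩ := Module.projective_lifting_property g pres hg
  have hφ' : ∀ x, g (φ x) = pres x := fun x => congrArg (fun f => f x) (congrArg DFunLike.coe hφ)
  have hmem : ∀ w : ↥(LinearMap.ker pres), φ (w : F) ∈ LinearMap.range f := by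
    intro w
    rw [hrange, LinearMap.mem_ker, hφ']
    exact w.2
  set eN := LinearEquiv.ofInjective f hf with heN
  have heval : ∀ z : ↥(LinearMap.range f), f (eN.symm z) = (z : E) := by
    intro z
    have := congrArg Subtype.val (eN.apply_symm_apply z)
    rwa [heN, LinearEquiv.ofInjective_apply] at this
  set ψ : ↥(LinearMap.ker pres) →ₗ[Λ] N := (eN.symm : ↥(LinearMap.range f) →ₗ[Λ] N).comp
    ((φ.comp (LinearMap.ker pres).subtype).codRestrict (LinearMap.range f) hmem) with hψ
  have hψval : ∀ w : ↥(LinearMap.ker pres), f (ψ w) = φ (w : F) := by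
    intro w
    simp only [hψ, LinearMap.coe_comp, Function.comp_apply, LinearEquiv.coe_coe]
    rw [heval]
    rfl
  obtain ⟨Ψ, hΨ⟩ := hHE ψ
  have hΨval : ∀ w : ↥(LinearMap.ker pres), Ψ (w : F) = ψ w := fun w =>
    congrArg (fun f => f w) (congrArg DFunLike.coe hΨ)
  set σ := φ - f.comp Ψ with hσdef
  have hσ : LinearMap.ker pres ≤ LinearMap.ker σ := by
    intro x hx
    rw [LinearMap.mem_ker]
    have : Ψ x = ψ ⟨x, hx⟩ := hΨval ⟨x, hx⟩
    simp only [hσdef, LinearMap.sub_apply, LinearMap.coe_comp, Function.comp_apply]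
    rw [this, hψval]
    simp [sub_self]
  obtain ⟨s, hs⟩ := auxFactorThrough pres hpres σ hσ
  have hsval : ∀ x, s (pres x) = σ x := fun x => congrArg (fun f => f x) (congrArg DFunLike.coe hs)
  refine ⟨s, ?_⟩
  apply LinearMap.ext; intro m'
  obtain ⟨x, rfl⟩ := hpres m'
  have hgf : ∀ y, g (f y) = 0 := by
    intro y
    have : f y ∈ LinearMap.ker g := hrange ▸ LinearMap.mem_range_self f y
    exact this
  simp only [LinearMap.coe_comp, Function.comp_apply, LinearMap.id_coe, id_eq]
  rw [hsval]
  simp only [hσdef, LinearMap.sub_apply, LinearMap.coe_comp, Function.comp_apply, map_sub, hgf, hφ']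
  simp

/-- `Ext¹(-, N) = 0` passes to direct summands in the first argument (via a pullback). -/
lemma auxExtVanishSummandLeft {M M' N : Type} [AddCommGroup M] [Module Λ M] [AddCommGroup M']
    [Module Λ M'] [AddCommGroup N] [Module Λ N] (hEV : ExtVanish Λ M N)
    (ι : M' →ₗ[Λ] M) (p : M →ₗ[Λ] M') (hpι : p.comp ι = LinearMap.id) : ExtVanish Λ M' N := by
  intro E _ _ f g hf hg hrange
  have hpι' : ∀ x, p (ι x) = x := fun x => congrArg (fun f => f x) (congrArg DFunLike.coe hpι)
  set T : E × M →ₗ[Λ] M' := g.comp (LinearMap.fst Λ E M) - p.comp (LinearMap.snd Λ E M) with hT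
  set E₁ := LinearMap.ker T with hE₁
  have hgf : ∀ y, g (f y) = 0 := by
    intro y
    have : f y ∈ LinearMap.ker g := hrange ▸ LinearMap.mem_range_self f y
    exact this
  set f₁ : N →ₗ[Λ] ↥E₁ := (LinearMap.prod f 0).codRestrict E₁
    (by intro c; simp [hE₁, hT, LinearMap.mem_ker, hgf]) with hf₁
  set g₁ : ↥E₁ →ₗ[Λ] M := (LinearMap.snd Λ E M).comp E₁.subtype with hg₁
  have hf₁inj : Function.Injective f₁ := by
    intro a b hab
    have := congrArg Prod.fst (congrArg Subtype.val hab)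
    exact hf this
  have hg₁surj : Function.Surjective g₁ := by
    intro m
    obtain ⟨e, he⟩ := hg (p m)
    exact ⟨⟨(e, m), by simp [hE₁, hT, LinearMap.mem_ker, he]⟩, rfl⟩
  have hrange₁ : LinearMap.range f₁ = LinearMap.ker g₁ := by
    apply le_antisymm
    · rintro _ ⟨x, rfl⟩
      simp [hg₁, LinearMap.mem_ker, hf₁]
    · rintro ⟨⟨e, m⟩, hmem⟩ hz
      have hm0 : m = 0 := hz
      have he0 : g e = 0 := by
        have := LinearMap.mem_ker.mp hmem
        simp only [hT, LinearMap.sub_apply, LinearMap.coe_comp, Function.comp_apply,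
          LinearMap.fst_apply, LinearMap.snd_apply] at this
        rw [hm0] at this
        simpa using this
      have : e ∈ LinearMap.range f := by rw [hrange]; exact he0
      obtain ⟨x, hx⟩ := this
      exact ⟨x, Subtype.ext (by simp [hf₁, hx, hm0])⟩
  obtain ⟨s₁, hs₁⟩ := hEV ↥E₁ f₁ g₁ hf₁inj hg₁surj hrange₁
  have hs₁val : ∀ m, g₁ (s₁ m) = m := fun m => congrArg (fun f => f m) (congrArg DFunLike.coe hs₁)
  refine ⟨(LinearMap.fst Λ E M).comp (E₁.subtype.comp (s₁.comp ι)), ?_⟩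
  apply LinearMap.ext; intro m'
  have hmem := LinearMap.mem_ker.mp (s₁ (ι m')).2
  simp only [hT, LinearMap.sub_apply, LinearMap.coe_comp, Function.comp_apply, LinearMap.fst_apply,
    LinearMap.snd_apply, sub_eq_zero] at hmem
  have h2 : ((s₁ (ι m') : E × M)).2 = ι m' := hs₁val (ι m')
  show g ((s₁ (ι m') : E × M)).1 = LinearMap.id m'
  rw [hmem, h2, hpι']
  rfl

/-- Lifting a map to the quotient through `mkQ`, given the extension property for `K`. -/
lemma auxLiftAlongMkQ {M F NN : Type} [AddCommGroup M] [Module Λ M] [AddCommGroup F]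
    [Module Λ F] [Module.Projective Λ F] [AddCommGroup NN] [Module Λ NN]
    (pres : F →ₗ[Λ] M) (hpres : Function.Surjective pres) (K : Submodule Λ NN)
    (hHE : HEP Λ (LinearMap.ker pres) ↥K) (g : M →ₗ[Λ] (NN ⧸ K)) :
    ∃ h : M →ₗ[Λ] NN, K.mkQ.comp h = g := by
  obtain ⟨φ, hφ⟩ := Module.projective_lifting_property K.mkQ (g.comp pres) K.mkQ_surjective
  have hφ' : ∀ x, K.mkQ (φ x) = g (pres x) := fun x =>
    congrArg (fun f => f x) (congrArg DFunLike.coe hφ)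
  have hmem : ∀ w : ↥(LinearMap.ker pres), φ (w : F) ∈ K := by
    intro w
    have h1 : K.mkQ (φ (w : F)) = 0 := by
      rw [hφ']
      have : pres (w : F) = 0 := w.2
      rw [this, map_zero]
    rwa [Submodule.mkQ_apply, Submodule.Quotient.mk_eq_zero] at h1
  obtain ⟨Ψ, hΨ⟩ := hHE ((φ.comp (LinearMap.ker pres).subtype).codRestrict K hmem)
  have hΨval : ∀ w : ↥(LinearMap.ker pres), (Ψ (w : F) : NN) = φ (w : F) := by
    intro w
    have := congrArg (fun f => f w) (congrArg DFunLike.coe hΨ)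
    exact congrArg Subtype.val this
  set σ := φ - K.subtype.comp Ψ with hσdef
  have hσ : LinearMap.ker pres ≤ LinearMap.ker σ := by
    intro x hx
    rw [LinearMap.mem_ker]
    simp only [hσdef, LinearMap.sub_apply, LinearMap.coe_comp, Function.comp_apply,
      Submodule.coe_subtype]
    rw [hΨval ⟨x, hx⟩]
    simp
  obtain ⟨h, hh⟩ := auxFactorThrough pres hpres σ hσ
  have hhval : ∀ x, h (pres x) = σ x := fun x => congrArg (fun f => f x) (congrArg DFunLike.coe hh)
  refine ⟨h, ?_⟩
  apply LinearMap.ext; intro m'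
  obtain ⟨x, rfl⟩ := hpres m'
  simp only [LinearMap.coe_comp, Function.comp_apply]
  rw [hhval]
  simp only [hσdef, LinearMap.sub_apply, LinearMap.coe_comp, Function.comp_apply, map_sub,
    Submodule.coe_subtype]
  rw [hφ']
  have : K.mkQ ((Ψ x : NN)) = 0 := by
    rw [Submodule.mkQ_apply, Submodule.Quotient.mk_eq_zero]
    exact (Ψ x).2
  rw [this, sub_zero]

end MyAux

section MyAux2
open Function

variable {Λ : Type} [Ring Λ]

/-- Happel–Ringel: a nonzero endomorphism of a rigid indecomposable finite length module
over a hereditary ring is bijective. -/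
lemma auxHappelRingel {M : Type} [AddCommGroup M] [Module Λ M] (hfl : IsFiniteLength Λ M)
    (hind : ¬ Subsingleton M ∧ ∀ (P Q : Type) [AddCommGroup P] [Module Λ P] [AddCommGroup Q]
      [Module Λ Q], Nonempty (M ≃ₗ[Λ] P × Q) → Subsingleton P ∨ Subsingleton Q)
    (hher : ∀ (P : Type) [AddCommGroup P] [Module Λ P], Module.Projective Λ P →
      ∀ N : Submodule Λ P, Module.Projective Λ N)
    (hEV : ExtVanish Λ M M) (f : M →ₗ[Λ] M) : f = 0 ∨ Function.Bijective f := by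
  classical
  by_contra hcon
  push_neg at hcon
  obtain ⟨hf0, hnb⟩ := hcon
  haveI hN := (isFiniteLength_iff_isNoetherian_isArtinian.mp hfl).1
  haveI hA := (isFiniteLength_iff_isNoetherian_isArtinian.mp hfl).2
  have hnil : ∃ n, f ^ n = 0 := by
    rcases auxBijectiveOrNilpotent hfl hind f with h | ⟨n, _, hn⟩
    · exact absurd h hnb
    · exact ⟨n, hn⟩
  set m := Nat.find hnil with hmdef
  have hm : f ^ m = 0 := Nat.find_spec hnil
  have hmin : ∀ k < m, f ^ k ≠ 0 := fun k hk => Nat.find_min hnil hk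
  have hm2 : 2 ≤ m := by
    by_contra hlt
    push_neg at hlt
    interval_cases m
    · have h10 : (1 : M →ₗ[Λ] M) = 0 := by rw [← pow_zero f]; exact hm
      apply hind.1
      refine subsingleton_of_forall_eq 0 (fun x => ?_)
      have h11 := congrArg (fun φ => φ x) (congrArg DFunLike.coe h10)
      simpa using h11
    · exact hf0 (by rw [← pow_one f]; exact hm)
  set g := f ^ (m - 1) with hgdef
  have hg0 : g ≠ 0 := hmin _ (by omega)
  have hgg : g * g = 0 := by
    rw [hgdef, ← pow_add]
    have : m - 1 + (m - 1) = m + (m - 2) := by omega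
    rw [this, pow_add, hm, zero_mul]
  have hggx : ∀ x, g (g x) = 0 := by
    intro x
    have := congrArg (fun φ => φ x) (congrArg DFunLike.coe hgg)
    simpa [Module.End.mul_apply] using this
  obtain ⟨x0, hx0⟩ : ∃ x, g x ≠ 0 := by
    by_contra hall
    push_neg at hall
    exact hg0 (LinearMap.ext fun x => by simpa using hall x)
  have hginj : ¬ Function.Injective g := by
    intro hinj
    exact hx0 (hinj (by simpa using hggx x0))
  set I := LinearMap.range g with hI
  have hItop : I ≠ ⊤ := by
    intro htop
    apply hx0
    obtain ⟨y, hy⟩ : ∃ y, g y = x0 := by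
      have : x0 ∈ I := htop ▸ Submodule.mem_top
      exact this
    rw [← hy]
    exact hggx y
  set q := I.mkQ with hq
  have hqg : ∀ x, q (g x) = 0 := by
    intro x
    rw [hq, Submodule.mkQ_apply, Submodule.Quotient.mk_eq_zero]
    exact LinearMap.mem_range_self g x
  haveI : Module.Finite Λ (M ⧸ I) := ⟨IsNoetherian.noetherian ⊤⟩
  obtain ⟨n₂, pres₂, hpres₂⟩ := Module.Finite.exists_fin' Λ (M ⧸ I)
  haveI : Module.Projective Λ (Fin n₂ → Λ) := inferInstance
  haveI hΩ₂proj : Module.Projective Λ ↥(LinearMap.ker pres₂) :=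
    hher (Fin n₂ → Λ) inferInstance (LinearMap.ker pres₂)
  obtain ⟨σ₂, hσ₂⟩ := Module.projective_lifting_property q pres₂ I.mkQ_surjective
  have hσ₂' : ∀ x, q (σ₂ x) = pres₂ x := fun x =>
    congrArg (fun φ => φ x) (congrArg DFunLike.coe hσ₂)
  have hσ₂mem : ∀ w : ↥(LinearMap.ker pres₂), σ₂ (w : Fin n₂ → Λ) ∈ I := by
    intro w
    have h1 : q (σ₂ (w : Fin n₂ → Λ)) = 0 := by
      rw [hσ₂']
      exact w.2
    rwa [hq, Submodule.mkQ_apply, Submodule.Quotient.mk_eq_zero] at h1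
  set ψε : ↥(LinearMap.ker pres₂) →ₗ[Λ] ↥I :=
    (σ₂.comp (LinearMap.ker pres₂).subtype).codRestrict I hσ₂mem with hψε
  obtain ⟨ψ', hψ'⟩ := Module.projective_lifting_property g.rangeRestrict ψε
    g.surjective_rangeRestrict
  have hgψ' : ∀ w : ↥(LinearMap.ker pres₂), g (ψ' w) = σ₂ (w : Fin n₂ → Λ) := by
    intro w
    have := congrArg (fun φ => φ w) (congrArg DFunLike.coe hψ')
    have h2 := congrArg Subtype.val this
    exact h2
  set d : ↥(LinearMap.ker pres₂) →ₗ[Λ] M × (Fin n₂ → Λ) :=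
    LinearMap.prod ψ' (-((LinearMap.ker pres₂).subtype)) with hd
  set D := LinearMap.range d with hD
  set jM : M →ₗ[Λ] ((M × (Fin n₂ → Λ)) ⧸ D) := D.mkQ.comp (LinearMap.inl Λ M (Fin n₂ → Λ))
    with hjM
  have hDker : D ≤ LinearMap.ker (pres₂.comp (LinearMap.snd Λ M (Fin n₂ → Λ))) := by
    rintro _ ⟨w, rfl⟩
    have hw : (w : Fin n₂ → Λ) ∈ LinearMap.ker pres₂ := w.2
    simp only [hd, LinearMap.mem_ker, LinearMap.coe_comp, Function.comp_apply, LinearMap.prod_apply,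
      Function.prod, LinearMap.snd_apply, LinearMap.neg_apply, map_neg, Submodule.coe_subtype]
    rw [LinearMap.mem_ker.mp hw, neg_zero]
  set gE : ((M × (Fin n₂ → Λ)) ⧸ D) →ₗ[Λ] (M ⧸ I) :=
    D.liftQ (pres₂.comp (LinearMap.snd Λ M (Fin n₂ → Λ))) hDker with hgE
  have hgEmk : ∀ z : M × (Fin n₂ → Λ), gE (D.mkQ z) = pres₂ z.2 := fun z => rfl
  have hjMinj : Function.Injective jM := by
    rw [← LinearMap.ker_eq_bot, eq_bot_iff]
    intro x hx
    have hx0' : D.mkQ (x, 0) = 0 := hx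
    rw [Submodule.mkQ_apply, Submodule.Quotient.mk_eq_zero] at hx0'
    obtain ⟨w, hw⟩ := hx0'
    have hw2 : -(w : Fin n₂ → Λ) = 0 := congrArg Prod.snd hw
    have hw0 : w = 0 := by apply Subtype.ext; simpa using hw2
    have := congrArg Prod.fst hw
    simp only [hd, LinearMap.prod_apply, Function.prod] at this
    rw [hw0] at this
    simpa using this.symm
  have hgEsurj : Function.Surjective gE := by
    intro z
    obtain ⟨y, hy⟩ := hpres₂ z
    exact ⟨D.mkQ (0, y), by rw [hgEmk]; exact hy⟩
  have hrangejM : LinearMap.range jM = LinearMap.ker gE := by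
    apply le_antisymm
    · rintro _ ⟨x, rfl⟩
      simp only [LinearMap.mem_ker, hjM, LinearMap.coe_comp, Function.comp_apply, LinearMap.inl_apply]
      rw [hgEmk]
      exact map_zero pres₂
    · intro z hz
      obtain ⟨⟨x, y⟩, rfl⟩ := D.mkQ_surjective z
      have hy : y ∈ LinearMap.ker pres₂ := by
        have := LinearMap.mem_ker.mp hz
        rw [hgEmk] at this
        exact LinearMap.mem_ker.mpr this
      refine ⟨x + ψ' ⟨y, hy⟩, ?_⟩
      simp only [hjM, LinearMap.coe_comp, Function.comp_apply, LinearMap.inl_apply, Submodule.mkQ_apply]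
      rw [Submodule.Quotient.eq]
      refine ⟨⟨y, hy⟩, ?_⟩
      simp [hd]
  set T : ((M × (Fin n₂ → Λ)) ⧸ D) × M →ₗ[Λ] (M ⧸ I) :=
    gE.comp (LinearMap.fst Λ _ M) - q.comp (LinearMap.snd Λ _ M) with hT
  set E' := LinearMap.ker T with hE'
  set j' : M →ₗ[Λ] ↥E' := (LinearMap.prod jM 0).codRestrict E' (by
    intro c
    simp only [hE', hT, LinearMap.mem_ker, LinearMap.sub_apply, LinearMap.coe_comp, Function.comp_apply,
      LinearMap.fst_apply, LinearMap.snd_apply, LinearMap.prod_apply, Function.prod,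
      LinearMap.zero_apply, map_zero]
    have : gE (jM c) = 0 := by
      rw [hjM]
      simp only [LinearMap.coe_comp, Function.comp_apply, LinearMap.inl_apply]
      rw [hgEmk]
      exact map_zero pres₂
    rw [this, sub_zero]) with hj'
  set g' : ↥E' →ₗ[Λ] M := (LinearMap.snd Λ _ M).comp E'.subtype with hg'
  have hj'inj : Function.Injective j' := by
    intro a b hab
    have := congrArg Prod.fst (congrArg Subtype.val hab)
    exact hjMinj this
  have hg'surj : Function.Surjective g' := by
    intro x
    obtain ⟨e, he⟩ := hgEsurj (q x)
    exact ⟨⟨(e, x), by simp [hE', hT, LinearMap.mem_ker, he]⟩, rfl⟩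
  have hrangej' : LinearMap.range j' = LinearMap.ker g' := by
    apply le_antisymm
    · rintro _ ⟨x, rfl⟩
      simp [hg', LinearMap.mem_ker, hj']
    · rintro ⟨⟨e, x⟩, hmem⟩ hz
      have hx0' : x = 0 := hz
      have he0 : gE e = 0 := by
        have := LinearMap.mem_ker.mp hmem
        simp only [hT, LinearMap.sub_apply, LinearMap.coe_comp, Function.comp_apply,
          LinearMap.fst_apply, LinearMap.snd_apply] at this
        rw [hx0', map_zero] at this
        simpa using this
      have : e ∈ LinearMap.range jM := by rw [hrangejM]; exact he0
      obtain ⟨y, hy⟩ := this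
      exact ⟨y, Subtype.ext (by simp [hj', hy, hx0'])⟩
  obtain ⟨s, hs⟩ := hEV ↥E' j' g' hj'inj hg'surj hrangej'
  have hsval : ∀ x, g' (s x) = x := fun x => congrArg (fun φ => φ x) (congrArg DFunLike.coe hs)
  set α : M →ₗ[Λ] ((M × (Fin n₂ → Λ)) ⧸ D) :=
    (LinearMap.fst Λ _ M).comp (E'.subtype.comp s) with hα
  have hαval : ∀ x, gE (α x) = q x := by
    intro x
    have hmem := LinearMap.mem_ker.mp (s x).2
    simp only [hT, LinearMap.sub_apply, LinearMap.coe_comp, Function.comp_apply, LinearMap.fst_apply,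
      LinearMap.snd_apply, sub_eq_zero] at hmem
    have h2 : ((s x : ((M × (Fin n₂ → Λ)) ⧸ D) × M)).2 = x := hsval x
    rw [h2] at hmem
    exact hmem
  have hDkerβ : D ≤ LinearMap.ker (g.comp (LinearMap.fst Λ M (Fin n₂ → Λ)) +
      σ₂.comp (LinearMap.snd Λ M (Fin n₂ → Λ))) := by
    rintro _ ⟨w, rfl⟩
    simp only [hd, LinearMap.mem_ker, LinearMap.add_apply, LinearMap.coe_comp, Function.comp_apply,
      LinearMap.prod_apply, Function.prod, LinearMap.fst_apply, LinearMap.snd_apply,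
      LinearMap.neg_apply, map_neg, Submodule.coe_subtype]
    rw [hgψ' w]
    simp
  set β : ((M × (Fin n₂ → Λ)) ⧸ D) →ₗ[Λ] M := D.liftQ (g.comp (LinearMap.fst Λ M (Fin n₂ → Λ)) +
    σ₂.comp (LinearMap.snd Λ M (Fin n₂ → Λ))) hDkerβ with hβ
  have hβmk : ∀ z : M × (Fin n₂ → Λ), β (D.mkQ z) = g z.1 + σ₂ z.2 := fun z => rfl
  have hβjM : ∀ x, β (jM x) = g x := by
    intro x
    rw [hjM]
    simp only [LinearMap.coe_comp, Function.comp_apply, LinearMap.inl_apply]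
    rw [hβmk]
    simp
  have hqβ : ∀ z, q (β z) = gE z := by
    intro z
    obtain ⟨⟨a, b⟩, rfl⟩ := D.mkQ_surjective z
    rw [hβmk, hgEmk, map_add, hqg, zero_add, hσ₂']
  set γ : M →ₗ[Λ] M := β.comp α with hγ
  have hqγ : ∀ x, q (γ x) = q x := by
    intro x
    rw [hγ]
    simp only [LinearMap.coe_comp, Function.comp_apply]
    rw [hqβ, hαval]
  set B : M →ₗ[Λ] M := γ - LinearMap.id with hB
  have hBmem : ∀ x, B x ∈ I := by
    intro x
    have : q (B x) = 0 := by
      simp only [hB, LinearMap.sub_apply, LinearMap.id_coe, id_eq, map_sub]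
      rw [hqγ, sub_self]
    rwa [hq, Submodule.mkQ_apply, Submodule.Quotient.mk_eq_zero] at this
  have hBnsurj : ¬ Function.Surjective B := by
    intro hsurj
    apply hItop
    rw [eq_top_iff]
    intro y _
    obtain ⟨x, hx⟩ := hsurj y
    exact hx ▸ hBmem x
  obtain ⟨nb, hnb1, hBnil⟩ : ∃ nb, 1 ≤ nb ∧ B ^ nb = 0 := by
    rcases auxBijectiveOrNilpotent hfl hind B with h | h
    · exact absurd h.2 hBnsurj
    · exact h
  set δ : M →ₗ[Λ] ↥I := B.codRestrict I hBmem with hδ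
  set ν : ↥I →ₗ[Λ] ↥I := δ.comp I.subtype with hν
  have hsubν : ∀ (k : ℕ) (x : ↥I), (((ν ^ k) x : ↥I) : M) = (B ^ k) (x : M) := by
    intro k
    induction k with
    | zero => intro x; simp
    | succ k ih =>
      intro x
      rw [pow_succ, pow_succ]
      simp only [Module.End.mul_apply]
      have h1 : ((ν x : ↥I) : M) = B (x : M) := rfl
      rw [ih (ν x), h1]
  have hνnil : ν ^ nb = 0 := by
    apply LinearMap.ext; intro x
    apply Subtype.ext
    have hz : (B ^ nb) (x : M) = 0 := by
      have := congrArg (fun φ => φ (x : M)) (congrArg DFunLike.coe hBnil)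
      simpa using this
    show (((ν ^ nb) x : ↥I) : M) = ((0 : ↥I →ₗ[Λ] ↥I) x : M)
    rw [hsubν nb x, hz]
    simp
  have hunit : IsUnit ((1 : ↥I →ₗ[Λ] ↥I) + ν) := IsNilpotent.isUnit_one_add ⟨nb, hνnil⟩
  obtain ⟨uu, huu⟩ := hunit
  set v : ↥I →ₗ[Λ] ↥I := ↑uu⁻¹ with hv
  have hmul : ((1 : ↥I →ₗ[Λ] ↥I) + ν) * v = 1 := by
    rw [← huu, hv]
    exact uu.mul_inv
  have hαmem : ∀ x : ↥I, α (x : M) ∈ LinearMap.range jM := by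
    intro x
    rw [hrangejM, LinearMap.mem_ker, hαval]
    rw [hq, Submodule.mkQ_apply, Submodule.Quotient.mk_eq_zero]
    exact x.2
  set eJ := LinearEquiv.ofInjective jM hjMinj with heJ
  set w : ↥I →ₗ[Λ] M := (eJ.symm : ↥(LinearMap.range jM) →ₗ[Λ] M).comp
    ((α.comp I.subtype).codRestrict (LinearMap.range jM) hαmem) with hw
  have hjw : ∀ x : ↥I, jM (w x) = α (x : M) := by
    intro x
    have hzz : ∀ z : ↥(LinearMap.range jM), jM (eJ.symm z) = (z : (M × (Fin n₂ → Λ)) ⧸ D) := by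
      intro z
      have := congrArg Subtype.val (eJ.apply_symm_apply z)
      rwa [heJ, LinearEquiv.ofInjective_apply] at this
    simp only [hw, LinearMap.coe_comp, Function.comp_apply, LinearEquiv.coe_coe]
    rw [hzz]
    rfl
  have hkey : ∀ x : ↥I, g (w x) = (x : M) + ((ν x : ↥I) : M) := by
    intro x
    rw [← hβjM (w x), hjw]
    have hβα : β (α (x : M)) = γ (x : M) := rfl
    rw [hβα]
    have hγx : γ (x : M) = (x : M) + B (x : M) := by
      simp [hB]
    rw [hγx]
    rfl
  set s₀ : ↥I →ₗ[Λ] M := w.comp v with hs₀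
  have hsec : ∀ x : ↥I, g (s₀ x) = (x : M) := by
    intro x
    simp only [hs₀, LinearMap.coe_comp, Function.comp_apply]
    rw [hkey (v x)]
    have hx1 : ((1 : ↥I →ₗ[Λ] ↥I) + ν) (v x) = x := by
      have := congrArg (fun φ => φ x) (congrArg DFunLike.coe hmul)
      simpa [Module.End.mul_apply] using this
    have h2 : (v x : M) + ((ν (v x) : ↥I) : M) = ((((1 : ↥I →ₗ[Λ] ↥I) + ν) (v x) : ↥I) : M) := by
      simp [LinearMap.add_apply]
    rw [h2, hx1]
  set π : M →ₗ[Λ] ↥I := g.codRestrict I (fun c => LinearMap.mem_range_self g c) with hπ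
  have hπs : π.comp s₀ = LinearMap.id := by
    apply LinearMap.ext; intro x
    apply Subtype.ext
    simp only [LinearMap.coe_comp, Function.comp_apply, hπ, LinearMap.codRestrict_apply,
      LinearMap.id_coe, id_eq]
    exact hsec x
  obtain ⟨e⟩ := auxEquivProdOfSplit π s₀ hπs
  rcases hind.2 ↥I ↥(LinearMap.ker π) ⟨e⟩ with hsub | hsub
  · apply hx0
    have : (⟨g x0, LinearMap.mem_range_self g x0⟩ : ↥I) = 0 := Subsingleton.elim _ _
    simpa using congrArg Subtype.val this
  · obtain ⟨a, b, hab, hne⟩ := Function.not_injective_iff.mp hginj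
    have hmemk : a - b ∈ LinearMap.ker π := by
      rw [LinearMap.mem_ker]
      apply Subtype.ext
      simp [hπ, map_sub, hab]
    have h00 : (⟨a - b, hmemk⟩ : ↥(LinearMap.ker π)) = 0 := Subsingleton.elim _ _
    have h0 : a - b = 0 := by simpa using congrArg Subtype.val h00
    exact hne (by rwa [sub_eq_zero] at h0)

end MyAux2


open Function

/-- For `i ≠ j` every homomorphism `Δ(j) → Δ(i)` between the cokernels of the minimal
right approximations is zero; hence the `Δ(i)` form an antichain. -/
theorem stmt4 (k : Type) [CommRing k] [IsArtinianRing k]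
    (Λ : Type) [Ring Λ] [Algebra k Λ] (hart : IsFiniteLength k Λ)
    (hher : IsHereditaryRing Λ)
    (t : ℕ) (Nf : Fin t → Type) [∀ i, AddCommGroup (Nf i)] [∀ i, Module Λ (Nf i)]
    (hfl : ∀ i, IsFiniteLength Λ (Nf i)) (hind : ∀ i, Indec Λ (Nf i))
    (hnorm : IsNormal Λ (∀ i, Nf i)) (hself : ExtVanish Λ (∀ i, Nf i) (∀ i, Nf i))
    (U : Fin t → Type) [∀ i, AddCommGroup (U i)] [∀ i, Module Λ (U i)]
    (u : ∀ i, U i →ₗ[Λ] Nf i)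
    (hUadd : ∀ i, InAddFam Λ t Nf {j | j ≠ i} (U i))
    (happrox : ∀ i, ∀ (X : Type) [AddCommGroup X] [Module Λ X],
      InAddFam Λ t Nf {j | j ≠ i} X →
      ∀ f : X →ₗ[Λ] Nf i, ∃ h : X →ₗ[Λ] U i, (u i).comp h = f)
    (hmin : ∀ i, ∀ h : U i →ₗ[Λ] U i, (u i).comp h = u i → Function.Bijective h) :
    (∀ i j, i ≠ j →
      ∀ f : (Nf j ⧸ LinearMap.range (u j)) →ₗ[Λ] (Nf i ⧸ LinearMap.range (u i)),
        f = 0) ∧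
    IsAntichainFam Λ t (fun i => Nf i ⧸ LinearMap.range (u i)) := by
  classical
  have hpresN : ∀ jj : Fin t, ∃ (n : ℕ) (pres : (Fin n → Λ) →ₗ[Λ] Nf jj),
      Function.Surjective pres := by
    intro jj
    haveI := (isFiniteLength_iff_isNoetherian_isArtinian.mp (hfl jj)).1
    haveI : Module.Finite Λ (Nf jj) := ⟨IsNoetherian.noetherian ⊤⟩
    exact Module.Finite.exists_fin' Λ (Nf jj)
  have hsingle : ∀ kk : Fin t, (LinearMap.proj kk).comp (LinearMap.single Λ Nf kk) =
      (LinearMap.id : Nf kk →ₗ[Λ] Nf kk) := by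
    intro kk; apply LinearMap.ext; intro x; simp
  have hHEPall : ∀ (jj : Fin t) (n : ℕ) (pres : (Fin n → Λ) →ₗ[Λ] Nf jj),
      Function.Surjective pres → ∀ kk, HEP Λ (LinearMap.ker pres) (Nf kk) := by
    intro jj n pres hpres kk
    have hEV1 : ExtVanish Λ (Nf jj) (∀ k', Nf k') :=
      auxExtVanishSummandLeft hself (LinearMap.single Λ Nf jj) (LinearMap.proj jj) (hsingle jj)
    have hbig : HEP Λ (LinearMap.ker pres) (∀ k', Nf k') := auxExtVanishToHEP pres hpres hEV1
    exact hbig.summand (LinearMap.single Λ Nf kk) (LinearMap.proj kk) (hsingle kk)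
  have main_lift : ∀ (jj ii : Fin t) (g : Nf jj →ₗ[Λ] (Nf ii ⧸ LinearMap.range (u ii))),
      ∃ h : Nf jj →ₗ[Λ] Nf ii, (LinearMap.range (u ii)).mkQ.comp h = g := by
    intro jj ii g
    obtain ⟨n, pres, hpres⟩ := hpresN jj
    haveI : Module.Projective Λ (Fin n → Λ) := inferInstance
    haveI : Module.Projective Λ ↥(LinearMap.ker pres) := hher _ inferInstance _
    obtain ⟨m, c, hc, ιU, pU, hU⟩ := hUadd ii
    have hP : HEP Λ (LinearMap.ker pres) (∀ a, Nf (c a)) :=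
      HEP.pi (fun a => hHEPall jj n pres hpres (c a))
    have hHU : HEP Λ (LinearMap.ker pres) (U ii) := hP.summand ιU pU hU
    have hHK : HEP Λ (LinearMap.ker pres) ↥(LinearMap.range (u ii)) :=
      hHU.epi (u ii).rangeRestrict (u ii).surjective_rangeRestrict
    exact auxLiftAlongMkQ pres hpres _ hHK g
  have homvanish : ∀ (jj ii : Fin t), jj ≠ ii →
      ∀ g : Nf jj →ₗ[Λ] (Nf ii ⧸ LinearMap.range (u ii)), g = 0 := by
    intro jj ii hne g
    obtain ⟨h, hh⟩ := main_lift jj ii g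
    have hadd : InAddFam Λ t Nf {x | x ≠ ii} (Nf jj) := by
      refine ⟨1, fun _ => jj, fun _ => hne, LinearMap.pi (fun _ => LinearMap.id),
        LinearMap.proj 0, ?_⟩
      apply LinearMap.ext; intro x
      simp
    obtain ⟨h', hh'⟩ := happrox ii (Nf jj) hadd h
    apply LinearMap.ext; intro x
    have h1 : (LinearMap.range (u ii)).mkQ (h x) = g x :=
      congrArg (fun φ => φ x) (congrArg DFunLike.coe hh)
    have h2 : u ii (h' x) = h x := congrArg (fun φ => φ x) (congrArg DFunLike.coe hh')
    have h3 : (LinearMap.range (u ii)).mkQ (u ii (h' x)) = 0 := by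
      rw [Submodule.mkQ_apply, Submodule.Quotient.mk_eq_zero]
      exact ⟨h' x, rfl⟩
    have : g x = 0 := by rw [← h1, ← h2, h3]
    simpa using this
  have part1 : ∀ i j, i ≠ j →
      ∀ f : (Nf j ⧸ LinearMap.range (u j)) →ₗ[Λ] (Nf i ⧸ LinearMap.range (u i)), f = 0 := by
    intro i j hij f
    have hz : f.comp (LinearMap.range (u j)).mkQ = 0 := homvanish j i (Ne.symm hij) _
    apply LinearMap.ext; intro y
    obtain ⟨x, rfl⟩ := (LinearMap.range (u j)).mkQ_surjective y
    have := congrArg (fun φ => φ x) (congrArg DFunLike.coe hz)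
    simpa using this
  have nontriv : ∀ i, Nontrivial (Nf i ⧸ LinearMap.range (u i)) := by
    intro i
    by_contra hnt
    rw [not_nontrivial_iff_subsingleton] at hnt
    have htop : LinearMap.range (u i) = ⊤ := Submodule.Quotient.subsingleton_iff.mp hnt
    have husurj : Function.Surjective (u i) := LinearMap.range_eq_top.mp htop
    obtain ⟨m, c, hc, ιU, pU, hU⟩ := hUadd i
    set fwd : (∀ k', Nf k') →ₗ[Λ] (∀ j : {x : Fin t // x ≠ i}, Nf j.1) ×
        (∀ j : {x : Fin t // ¬ x ≠ i}, Nf j.1) :=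
      LinearMap.prod (LinearMap.pi fun j => LinearMap.proj j.1)
        (LinearMap.pi fun j => LinearMap.proj j.1) with hfwd
    set bwd : ((∀ j : {x : Fin t // x ≠ i}, Nf j.1) ×
        (∀ j : {x : Fin t // ¬ x ≠ i}, Nf j.1)) →ₗ[Λ] (∀ k', Nf k') :=
      LinearMap.pi (fun k' => if h : k' ≠ i then
        (LinearMap.proj (⟨k', h⟩ : {x : Fin t // x ≠ i})).comp
          (LinearMap.fst Λ (∀ j : {x : Fin t // x ≠ i}, Nf j.1)
            (∀ j : {x : Fin t // ¬ x ≠ i}, Nf j.1))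
        else (LinearMap.proj (⟨k', h⟩ : {x : Fin t // ¬ x ≠ i})).comp
          (LinearMap.snd Λ (∀ j : {x : Fin t // x ≠ i}, Nf j.1)
            (∀ j : {x : Fin t // ¬ x ≠ i}, Nf j.1))) with hbwd
    have hfb : fwd.comp bwd = LinearMap.id := by
      apply LinearMap.ext; rintro ⟨x, y⟩
      refine Prod.ext ?_ ?_
      · funext j
        show bwd (x, y) j.1 = x j
        simp only [hbwd, LinearMap.pi_apply]
        rw [dif_pos j.2]
        rfl
      · funext j
        show bwd (x, y) j.1 = y j
        simp only [hbwd, LinearMap.pi_apply]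
        rw [dif_neg j.2]
        rfl
    have hbf : bwd.comp fwd = LinearMap.id := by
      apply LinearMap.ext; intro z
      funext k'
      show bwd (fwd z) k' = z k'
      simp only [hbwd, LinearMap.pi_apply]
      by_cases hk : k' ≠ i
      · rw [dif_pos hk]
        rfl
      · rw [dif_neg hk]
        rfl
    have e : (∀ k', Nf k') ≃ₗ[Λ] (∀ j : {x : Fin t // x ≠ i}, Nf j.1) ×
        (∀ j : {x : Fin t // ¬ x ≠ i}, Nf j.1) := LinearEquiv.ofLinear fwd bwd hfb hbf
    have castHom : ∀ (a b : Fin t) (h : a = b),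
        { φ : Nf a →ₗ[Λ] Nf b // ∀ v, HEq (φ v) v } := by
      rintro a b rfl
      exact ⟨LinearMap.id, fun v => HEq.rfl⟩
    set j₀ : {x : Fin t // ¬ x ≠ i} := ⟨i, fun h => h rfl⟩ with hj₀
    set ρ : Nf i →ₗ[Λ] (∀ j : {x : Fin t // ¬ x ≠ i}, Nf j.1) :=
      LinearMap.pi (fun j => (castHom i j.1 (not_not.mp j.2).symm).1) with hρ
    have hρ₀ : ∀ v, ρ v j₀ = v := by
      intro v
      simp only [hρ, LinearMap.pi_apply]
      exact eq_of_heq ((castHom i i (not_not.mp j₀.2).symm).2 v)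
    have hρsurj : Function.Surjective ρ := by
      intro y
      refine ⟨y j₀, ?_⟩
      funext j
      have hj : j = j₀ := Subtype.ext (not_not.mp j.2)
      rw [hj]
      exact hρ₀ (y j₀)
    set φmap : (Fin m → (∀ j : {x : Fin t // x ≠ i}, Nf j.1)) →ₗ[Λ] (∀ a, Nf (c a)) :=
      LinearMap.pi (fun a => (LinearMap.proj (⟨c a, hc a⟩ : {x : Fin t // x ≠ i}) :
          (∀ j : {x : Fin t // x ≠ i}, Nf j.1) →ₗ[Λ] Nf (c a)).comp
        (LinearMap.proj a : (Fin m → (∀ j : {x : Fin t // x ≠ i}, Nf j.1)) →ₗ[Λ]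
          (∀ j : {x : Fin t // x ≠ i}, Nf j.1))) with hφmap
    have hφsurj : Function.Surjective φmap := by
      intro z
      refine ⟨fun a => Pi.single (⟨c a, hc a⟩ : {x : Fin t // x ≠ i}) (z a), ?_⟩
      funext a
      simp only [hφmap, LinearMap.pi_apply, LinearMap.coe_comp, Function.comp_apply,
        LinearMap.proj_apply]
      exact Pi.single_eq_same _ _
    have hpUsurj : Function.Surjective pU := by
      intro x1
      exact ⟨ιU x1, congrArg (fun φ => φ x1) (congrArg DFunLike.coe hU)⟩
    have gen : Generates Λ (∀ j : {x : Fin t // x ≠ i}, Nf j.1)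
        (∀ j : {x : Fin t // ¬ x ≠ i}, Nf j.1) := by
      refine ⟨m, ρ.comp ((u i).comp (pU.comp φmap)), ?_⟩
      simp only [LinearMap.coe_comp]
      exact hρsurj.comp (husurj.comp (hpUsurj.comp hφsurj))
    have hsub := hnorm _ _ ⟨e⟩ gen
    apply (hind i).1
    constructor
    intro a b
    have : ρ a = ρ b := Subsingleton.elim _ _
    calc a = ρ a j₀ := (hρ₀ a).symm
      _ = ρ b j₀ := by rw [this]
      _ = b := hρ₀ b
  have hEVii : ∀ ii, ExtVanish Λ (Nf ii) (Nf ii) := by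
    intro ii
    obtain ⟨n, pres, hpres⟩ := hpresN ii
    haveI : Module.Projective Λ (Fin n → Λ) := inferInstance
    exact auxHEPToExtVanish pres hpres (hHEPall ii n pres hpres ii)
  have brick : ∀ i, IsBrick Λ (Nf i ⧸ LinearMap.range (u i)) := by
    intro i
    constructor
    · haveI := nontriv i
      intro h01
      obtain ⟨a, b, hab⟩ := exists_pair_ne (Nf i ⧸ LinearMap.range (u i))
      apply hab
      have key : ∀ z : Nf i ⧸ LinearMap.range (u i), z = 0 := by
        intro z
        calc z = (1 : Module.End Λ (Nf i ⧸ LinearMap.range (u i))) z := rfl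
          _ = (0 : Module.End Λ (Nf i ⧸ LinearMap.range (u i))) z := by rw [h01]
          _ = 0 := rfl
      rw [key a, key b]
    · intro f hf
      obtain ⟨h, hh⟩ := main_lift i i (f.comp (LinearMap.range (u i)).mkQ)
      have hhval : ∀ x, (LinearMap.range (u i)).mkQ (h x) =
          f ((LinearMap.range (u i)).mkQ x) :=
        fun x => congrArg (fun φ => φ x) (congrArg DFunLike.coe hh)
      rcases auxHappelRingel (hfl i) (hind i) hher (hEVii i) h with h0 | hbij
      · exfalso
        apply hf
        apply LinearMap.ext; intro y
        obtain ⟨x, rfl⟩ := (LinearMap.range (u i)).mkQ_surjective y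
        have := hhval x
        rw [h0] at this
        simpa using this.symm
      · have hsurj : Function.Surjective f := by
          intro y
          obtain ⟨z, rfl⟩ := (LinearMap.range (u i)).mkQ_surjective y
          obtain ⟨x, hx⟩ := hbij.2 z
          exact ⟨(LinearMap.range (u i)).mkQ x, by rw [← hhval, hx]⟩
        haveI := (isFiniteLength_iff_isNoetherian_isArtinian.mp (hfl i)).1
        have hinj := IsNoetherian.injective_of_surjective_endomorphism f hsurj
        exact (Module.End.isUnit_iff f).mpr ⟨hinj, hsurj⟩
  refine ⟨part1, brick, ?_⟩
  intro i j hij f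
  exact part1 j i (Ne.symm hij) f
end
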